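/- arXiv:1302.3709 — 3 statements merged into one kernel-verified Lean document; each statement's English description precedes it below -/
import Mathlib

section
/- Let {S₁, S₂, S₃, S₄, S₅} be a complete set of Pauli classes in dimension d = 4 (n = 2 qubits). Then there exists a maximal commuting Pauli class S such that every member of S is equal up to phase to a member of S₁ ∪ S₂ ∪ S₃ and S is not equal up to phase (as a set of operators) to any of S₁, S₂, S₃; moreover S is unique: any two maximal commuting Pauli classes with these properties contain the same operators up to phase. -/
open Matrix

noncomputable section

/-- Matrices on the Hilbert space of `n` qubits, with rows and columns indexed by
bit strings `Fin n → Fin 2`. -/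
abbrev QMat (n : ℕ) := Matrix (Fin n → Fin 2) (Fin n → Fin 2) ℂ

/-- The single-qubit identity. -/
def pI : Matrix (Fin 2) (Fin 2) ℂ := 1

/-- The single-qubit Pauli X. -/
def pX : Matrix (Fin 2) (Fin 2) ℂ := !![0, 1; 1, 0]

/-- The single-qubit Pauli Y. -/
def pY : Matrix (Fin 2) (Fin 2) ℂ := !![0, -Complex.I; Complex.I, 0]

/-- The single-qubit Pauli Z. -/
def pZ : Matrix (Fin 2) (Fin 2) ℂ := !![1, 0; 0, -1]

/-- The `n`-fold Kronecker product `W 0 ⊗ ⋯ ⊗ W (n-1)`, realized on indices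
`Fin n → Fin 2`. -/
def kron (n : ℕ) (W : Fin n → Matrix (Fin 2) (Fin 2) ℂ) : QMat n :=
  fun v w => ∏ j, W j (v j) (w j)

/-- `M` is an `n`-qubit Pauli operator: an `n`-fold Kronecker product of matrices
from `{I₂, X, Y, Z}`. -/
def IsPauliOp (n : ℕ) (M : QMat n) : Prop :=
  ∃ W : Fin n → Matrix (Fin 2) (Fin 2) ℂ,
    (∀ j, W j = pI ∨ W j = pX ∨ W j = pY ∨ W j = pZ) ∧ M = kron n W

/-- Two matrices are equal up to phase if one is a nonzero scalar multiple of the other. -/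
def PhaseEq {m : Type*} (A B : Matrix m m ℂ) : Prop := ∃ c : ℂ, c ≠ 0 ∧ A = c • B

/-- A maximal commuting Pauli class in dimension `d = 2 ^ n`: a set of `d - 1`
pairwise commuting non-identity `n`-qubit Pauli operators, pairwise distinct up to phase. -/
def IsMaxClass (n : ℕ) (C : Set (QMat n)) : Prop :=
  C.Finite ∧ C.ncard = 2 ^ n - 1 ∧
  (∀ U ∈ C, IsPauliOp n U ∧ U ≠ 1) ∧
  (∀ U ∈ C, ∀ V ∈ C, U * V = V * U) ∧
  (∀ U ∈ C, ∀ V ∈ C, U ≠ V → ¬ PhaseEq U V)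

/-- Two classes are disjoint if no member of one is equal up to phase to a member of the other. -/
def ClassDisjoint {n : ℕ} (C D : Set (QMat n)) : Prop :=
  ∀ U ∈ C, ∀ V ∈ D, ¬ PhaseEq U V

/-- Two classes are equal up to phase (as sets of operators). -/
def ClassPhaseEq {n : ℕ} (C D : Set (QMat n)) : Prop :=
  (∀ U ∈ C, ∃ V ∈ D, PhaseEq U V) ∧ (∀ V ∈ D, ∃ U ∈ C, PhaseEq U V)

/-- The standard Hermitian inner product on `ι → ℂ` (conjugate-linear in the first slot). -/
def cinner {ι : Type*} [Fintype ι] (x y : ι → ℂ) : ℂ :=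
  ∑ k, (starRingEnd ℂ) (x k) * y k

def pm : Fin 4 → Matrix (Fin 2) (Fin 2) ℂ := ![pI, pX, pY, pZ]
def madd : Fin 4 → Fin 4 → Fin 4 := ![![0,1,2,3],![1,0,3,2],![2,3,0,1],![3,2,1,0]]
def ee : Fin 4 → Fin 4 → ℕ := ![![0,0,0,0],![0,0,1,3],![0,3,0,1],![0,1,3,0]]

lemma pI_eq : pI = !![1,0;0,1] := by
  rw [pI, Matrix.one_fin_two]

lemma pm_mul (a b : Fin 4) : pm a * pm b = (Complex.I ^ (ee a b)) • pm (madd a b) := by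
  fin_cases a <;> fin_cases b <;>
    simp [pm, madd, ee, pI_eq, pX, pY, pZ, Matrix.mul_fin_two, Matrix.smul_of, Matrix.smul_cons, Matrix.smul_empty, Matrix.vecHead, Matrix.vecTail] <;>
    norm_num [Complex.ext_iff, pow_succ, Matrix.one_fin_two]

lemma kron_mul (n : ℕ) (W W' : Fin n → Matrix (Fin 2) (Fin 2) ℂ) :
    kron n W * kron n W' = kron n (fun j => W j * W' j) := by
  ext v w
  simp only [Matrix.mul_apply, kron, ← Finset.prod_mul_distrib]
  rw [Finset.prod_univ_sum]
  simp [Fintype.piFinset_univ]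

lemma kron_smul (n : ℕ) (c : Fin n → ℂ) (W : Fin n → Matrix (Fin 2) (Fin 2) ℂ) :
    kron n (fun j => c j • W j) = (∏ j, c j) • kron n W := by
  ext v w
  simp [kron, Finset.prod_mul_distrib, Matrix.smul_apply]

abbrev Wd := Fin 2 → Fin 4

def Mw (c : Wd) : Matrix (Fin 2 → Fin 2) (Fin 2 → Fin 2) ℂ := kron 2 (fun j => pm (c j))

def wadd (c c' : Wd) : Wd := fun j => madd (c j) (c' j)

lemma Mw_mul (c c' : Wd) :
    Mw c * Mw c' = (Complex.I ^ (ee (c 0) (c' 0) + ee (c 1) (c' 1))) • Mw (wadd c c') := by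
  rw [Mw, Mw, kron_mul]
  have : (fun j => pm (c j) * pm (c' j)) = fun j => (Complex.I ^ (ee (c j) (c' j))) • pm (wadd c c' j) := by
    funext j; rw [pm_mul]; rfl
  rw [this, kron_smul, Fin.prod_univ_two, ← pow_add, Mw]

def ip1 (A B : Matrix (Fin 2) (Fin 2) ℂ) : ℂ := ∑ x, ∑ y, (starRingEnd ℂ) (A x y) * B x y

lemma ip1_pm (a b : Fin 4) : ip1 (pm a) (pm b) = if a = b then 2 else 0 := by
  fin_cases a <;> fin_cases b <;>
    simp [ip1, pm, pI_eq, pX, pY, pZ, Fin.sum_univ_two, Complex.ext_iff] <;> norm_num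

def ipw (A B : Matrix (Fin 2 → Fin 2) (Fin 2 → Fin 2) ℂ) : ℂ :=
  ∑ v, ∑ w, (starRingEnd ℂ) (A v w) * B v w

lemma ipw_Mw (c c' : Wd) : ipw (Mw c) (Mw c') = ∏ j, ip1 (pm (c j)) (pm (c' j)) := by
  have h1 : ∀ j : Fin 2, ip1 (pm (c j)) (pm (c' j))
      = ∑ p : Fin 2 × Fin 2, (starRingEnd ℂ) (pm (c j) p.1 p.2) * pm (c' j) p.1 p.2 := by
    intro j; simp [ip1, Fintype.sum_prod_type]
  simp only [h1]
  rw [Finset.prod_univ_sum]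
  simp only [Fintype.piFinset_univ]
  rw [← Equiv.sum_comp (Equiv.arrowProdEquivProdArrow (Fin 2) (fun _ => Fin 2) (fun _ => Fin 2)).symm
      (fun q : Fin 2 → Fin 2 × Fin 2 => ∏ j, (starRingEnd ℂ) (pm (c j) (q j).1 (q j).2) * pm (c' j) (q j).1 (q j).2)]
  rw [Fintype.sum_prod_type]
  simp only [ipw, Mw, kron, map_prod, ← Finset.prod_mul_distrib]
  rfl

lemma ipw_Mw_self (c : Wd) : ipw (Mw c) (Mw c) = 4 := by
  rw [ipw_Mw]; simp [ip1_pm, Fin.prod_univ_two]; norm_num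

lemma ipw_Mw_ne (c c' : Wd) (h : c ≠ c') : ipw (Mw c) (Mw c') = 0 := by
  rw [ipw_Mw]
  have : ∃ j, c j ≠ c' j := by
    by_contra hc; push_neg at hc; exact h (funext hc)
  obtain ⟨j, hj⟩ := this
  apply Finset.prod_eq_zero (Finset.mem_univ j)
  rw [ip1_pm, if_neg hj]

lemma Mw_ne_zero (c : Wd) : Mw c ≠ 0 := by
  intro h
  have := ipw_Mw_self c
  rw [h] at this
  simp [ipw] at this

lemma ipw_smul (k : ℂ) (A B : Matrix (Fin 2 → Fin 2) (Fin 2 → Fin 2) ℂ) :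
    ipw A (k • B) = k * ipw A B := by
  simp only [ipw, Finset.mul_sum, Matrix.smul_apply, smul_eq_mul]
  congr 1; funext v; congr 1; funext w; ring

lemma not_phaseEq_Mw (c c' : Wd) (h : c ≠ c') : ¬ PhaseEq (Mw c) (Mw c') := by
  rintro ⟨k, hk, he⟩
  have h1 : ipw (Mw c') (Mw c) = 0 := ipw_Mw_ne c' c (Ne.symm h)
  rw [he, ipw_smul, ipw_Mw_self] at h1
  rcases mul_eq_zero.mp h1 with h2 | h2
  · exact hk h2
  · norm_num at h2

lemma Mw_inj : Function.Injective Mw := by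
  intro c c' h
  by_contra hne
  exact not_phaseEq_Mw c c' hne ⟨1, one_ne_zero, by simp [h]⟩

abbrev V := Fin 16
def padd (p q : V) : V := ⟨(p.val ^^^ q.val) % 16, Nat.mod_lt _ (by norm_num)⟩
/-- the symplectic form: true = anticommute -/
def omg (p q : V) : Bool :=
  xor (p.val.testBit 0 && q.val.testBit 1) (xor (p.val.testBit 1 && q.val.testBit 0)
    (xor (p.val.testBit 2 && q.val.testBit 3) (p.val.testBit 3 && q.val.testBit 2)))
def pcomm (p q : V) : Prop := omg p q = false

instance : DecidableRel pcomm := fun p q => by unfold pcomm; infer_instance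

lemma padd_self (x : V) : padd x x = 0 := by revert x; decide
lemma padd_zero (x : V) : padd x 0 = x := by revert x; decide
lemma zero_padd (x : V) : padd 0 x = x := by revert x; decide
lemma padd_comm (x y : V) : padd x y = padd y x := by revert x y; decide
lemma padd_cancel (x y : V) : padd x (padd x y) = y := by revert x y; decide
lemma padd_eq_zero {x y : V} (h : padd x y = 0) : x = y := by revert x y h; decide
lemma padd_assoc (x y z : V) : padd (padd x y) z = padd x (padd y z) := by revert x y z; decide
lemma Lself (x : V) : pcomm x x := by revert x; decide
lemma Lsym {x y : V} (h : pcomm x y) : pcomm y x := by revert x y h; decide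
lemma L3 {x u v : V} (h1 : pcomm x u) (h2 : pcomm x v) : pcomm x (padd u v) := by revert x u v; decide
lemma omg_add_left (x y z : V) : omg (padd x y) z = xor (omg x z) (omg y z) := by revert x y z; decide
lemma omg_add_right (x y z : V) : omg x (padd y z) = xor (omg x y) (omg x z) := by revert x y z; decide

lemma L1 : ∀ u v w : V, u ≠ 0 → v ≠ 0 → w ≠ 0 → u ≠ v → w ≠ u → w ≠ v →
    pcomm u v → pcomm u w → pcomm v w → w = padd u v := by decide

lemma L4 : ∀ x : V, (∀ y, pcomm x y) → x = 0 := by decide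

def Sp (a b : V) : Finset V := {0, a, b, padd a b}

set_option maxHeartbeats 2000000 in
set_option maxHeartbeats 4000000 in
lemma CL : ∀ a b x y : V, x ∈ Sp a b → y ∈ Sp a b → padd x y ∈ Sp a b := by decide

lemma Lzero : ∀ y : V, pcomm 0 y := by decide
lemma omg_symm (x y : V) : omg x y = omg y x := by revert x y; decide

lemma padd_padd_comm (p q r s : V) : padd (padd p q) (padd r s) = padd (padd p r) (padd q s) := by
  rw [padd_assoc, ← padd_assoc q r s, padd_comm q r, padd_assoc r q s, ← padd_assoc]

lemma padd_left_ne {a b : V} (h : b ≠ 0) : padd a b ≠ a := by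
  intro he
  have := padd_cancel a b
  rw [he, padd_self] at this
  exact h this.symm

lemma mem_Sp {a b x : V} : x ∈ Sp a b ↔ x = 0 ∨ x = a ∨ x = b ∨ x = padd a b := by
  simp [Sp]

set_option maxHeartbeats 1000000 in
lemma Sp_comm {a b : V} (hab : pcomm a b) {x y : V} (hx : x ∈ Sp a b) (hy : y ∈ Sp a b) :
    pcomm x y := by
  rw [mem_Sp] at hx hy
  rcases hx with rfl|rfl|rfl|rfl <;> rcases hy with rfl|rfl|rfl|rfl <;>
    first
      | exact Lzero _ | exact Lsym (Lzero _) | exact Lself _ | exact hab | exact Lsym hab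
      | exact L3 (Lself _) hab | exact L3 (Lsym hab) (Lself _)
      | exact Lsym (L3 (Lself _) hab) | exact Lsym (L3 (Lsym hab) (Lself _))

/-- a "good pair" spanning a plane -/
def goodp (a b : V) : Prop := a ≠ 0 ∧ b ≠ 0 ∧ a ≠ b ∧ pcomm a b

def Pl (a b : V) : Finset V := {a, b, padd a b}

lemma mem_Pl {a b x : V} : x ∈ Pl a b ↔ x = a ∨ x = b ∨ x = padd a b := by simp [Pl]

lemma mem_Sp_iff_Pl {a b x : V} (h : goodp a b) : x ∈ Sp a b ↔ x = 0 ∨ x ∈ Pl a b := by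
  rw [mem_Sp, mem_Pl]

lemma padd_ne_zero {a b : V} (h : a ≠ b) : padd a b ≠ 0 := fun he => h (padd_eq_zero he)

lemma Pl_nz {a b x : V} (h : goodp a b) (hx : x ∈ Pl a b) : x ≠ 0 := by
  obtain ⟨h1, h2, h3, _⟩ := h
  rcases mem_Pl.mp hx with rfl|rfl|rfl
  · exact h1
  · exact h2
  · exact padd_ne_zero h3

lemma Sp_card {a b : V} (h : goodp a b) : (Sp a b).card = 4 := by
  obtain ⟨h1, h2, h3, _⟩ := h
  have hba : padd a b ≠ b := by rw [padd_comm]; exact padd_left_ne h1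
  have hnab : padd a b ≠ a := padd_left_ne h2
  rw [Sp]
  rw [Finset.card_insert_of_notMem, Finset.card_insert_of_notMem,
      Finset.card_insert_of_notMem, Finset.card_singleton]
  · simp [hba.symm]
  · simp [h3, hnab.symm]
  · simp [h1.symm, h2.symm, (padd_ne_zero h3).symm]

lemma triple_repr (t : Finset V) (h3 : t.card = 3) (h0 : (0:V) ∉ t)
    (hc : ∀ u ∈ t, ∀ v ∈ t, pcomm u v) :
    ∃ a b, goodp a b ∧ t = Pl a b := by
  obtain ⟨a, b, c, hab, hac, hbc, ht⟩ := Finset.card_eq_three.mp h3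
  have ha : a ∈ t := by rw [ht]; simp
  have hb : b ∈ t := by rw [ht]; simp
  have hcm : c ∈ t := by rw [ht]; simp
  have hanz : a ≠ 0 := fun h => h0 (h ▸ ha)
  have hbnz : b ≠ 0 := fun h => h0 (h ▸ hb)
  have hcnz : c ≠ 0 := fun h => h0 (h ▸ hcm)
  have hcab : c = padd a b :=
    L1 a b c hanz hbnz hcnz hab (Ne.symm hac) (Ne.symm hbc)
      (hc a ha b hb) (hc a ha c hcm) (hc b hb c hcm)
  exact ⟨a, b, ⟨hanz, hbnz, hab, hc a ha b hb⟩, by rw [ht, hcab]; rfl⟩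

/-- the third element: sum of two distinct elements of a plane is in the plane -/
lemma Pl_add {a b x y : V} (hg : goodp a b) (hx : x ∈ Pl a b) (hy : y ∈ Pl a b)
    (hxy : x ≠ y) : padd x y ∈ Pl a b := by
  have h1 : x ∈ Sp a b := by rw [mem_Sp_iff_Pl hg]; right; exact hx
  have h2 : y ∈ Sp a b := by rw [mem_Sp_iff_Pl hg]; right; exact hy
  have h3 := CL a b x y h1 h2
  rcases (mem_Sp_iff_Pl hg).mp h3 with h4 | h4
  · exact absurd (padd_eq_zero h4) hxy
  · exact h4

section Decomp

variable {a0 b0 a1 b1 : V} (g0 : goodp a0 b0) (g1 : goodp a1 b1)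
  (hd : ∀ x, x ∈ Pl a0 b0 → x ∉ Pl a1 b1)

include g0 g1 hd

lemma Sp_inter {x : V} (h0 : x ∈ Sp a0 b0) (h1 : x ∈ Sp a1 b1) : x = 0 := by
  rcases (mem_Sp_iff_Pl g0).mp h0 with h | h
  · exact h
  rcases (mem_Sp_iff_Pl g1).mp h1 with h' | h'
  · exact h'
  · exact absurd h' (hd _ h)

lemma dec_unique {x y x' y' : V} (hx : x ∈ Sp a0 b0) (hy : y ∈ Sp a1 b1)
    (hx' : x' ∈ Sp a0 b0) (hy' : y' ∈ Sp a1 b1) (he : padd x y = padd x' y') :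
    x = x' ∧ y = y' := by
  have key : padd (padd x x') (padd y y') = 0 := by
    rw [padd_padd_comm, he, padd_self]
  have hm : padd x x' = padd y y' := padd_eq_zero key
  have h0 : padd x x' ∈ Sp a0 b0 := CL _ _ _ _ hx hx'
  have h1 : padd x x' ∈ Sp a1 b1 := hm ▸ CL _ _ _ _ hy hy'
  have hz : padd x x' = 0 := Sp_inter g0 g1 hd h0 h1
  constructor
  · exact padd_eq_zero hz
  · exact padd_eq_zero (hm ▸ hz)

lemma dec_exists : ∀ v : V, ∃ x ∈ Sp a0 b0, ∃ y ∈ Sp a1 b1, padd x y = v := by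
  classical
  set f : V × V → V := fun p => padd p.1 p.2 with hf
  have hinj : Set.InjOn f ((Sp a0 b0) ×ˢ (Sp a1 b1) : Finset (V × V)) := by
    rintro ⟨x, y⟩ hp ⟨x', y'⟩ hq he
    simp only [Finset.coe_product, Set.mem_prod, Finset.mem_coe] at hp hq
    obtain ⟨h1, h2⟩ := dec_unique g0 g1 hd hp.1 hp.2 hq.1 hq.2 he
    simp [h1, h2]
  have hcard : (((Sp a0 b0) ×ˢ (Sp a1 b1)).image f).card = 16 := by
    rw [Finset.card_image_of_injOn hinj, Finset.card_product, Sp_card g0, Sp_card g1]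
  have huniv : ((Sp a0 b0) ×ˢ (Sp a1 b1)).image f = Finset.univ := by
    apply Finset.eq_univ_of_card
    rw [hcard]; rfl
  intro v
  have : v ∈ ((Sp a0 b0) ×ˢ (Sp a1 b1)).image f := by rw [huniv]; exact Finset.mem_univ v
  obtain ⟨⟨x, y⟩, hp, he⟩ := Finset.mem_image.mp this
  rw [Finset.mem_product] at hp
  exact ⟨x, hp.1, y, hp.2, he⟩

end Decomp

def GoodT (A0 A1 A2 : Finset V) (t : Finset V) : Prop :=
  t.card = 3 ∧ (0:V) ∉ t ∧ (∀ u ∈ t, ∀ v ∈ t, pcomm u v) ∧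
  t ⊆ A0 ∪ A1 ∪ A2 ∧ t ≠ A0 ∧ t ≠ A1 ∧ t ≠ A2

lemma xor4 : ∀ p q r s : Bool, xor q r = false → xor (xor p q) (xor r s) = xor p s := by decide

lemma word_main (A : Fin 4 → Finset V)
    (hcard : ∀ i, (A i).card = 3)
    (hnz : ∀ i, (0:V) ∉ A i)
    (hcomm : ∀ i, ∀ u ∈ A i, ∀ v ∈ A i, pcomm u v)
    (hdisj : ∀ i j, i ≠ j → ∀ x, x ∈ A i → x ∉ A j) :
    ∃ t, GoodT (A 0) (A 1) (A 2) t ∧ ∀ t', GoodT (A 0) (A 1) (A 2) t' → t' = t := by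
  classical
  have hrep : ∀ i, ∃ a b, goodp a b ∧ A i = Pl a b := fun i =>
    triple_repr _ (hcard i) (hnz i) (hcomm i)
  choose α β hg hA using hrep
  have g0 := hg 0
  have g1 := hg 1
  have hd01 : ∀ x, x ∈ Pl (α 0) (β 0) → x ∉ Pl (α 1) (β 1) := by
    intro x hx hy
    exact hdisj 0 1 (by decide) x (by rw [hA 0]; exact hx) (by rw [hA 1]; exact hy)
  -- decomposition
  obtain ⟨d0, d1, hdec⟩ : ∃ d0 d1 : V → V, ∀ v, d0 v ∈ Sp (α 0) (β 0) ∧ d1 v ∈ Sp (α 1) (β 1)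
      ∧ padd (d0 v) (d1 v) = v := by
    have h := dec_exists g0 g1 hd01
    choose d0 h1 d1 h2 h3 using h
    exact ⟨d0, d1, fun v => ⟨h1 v, h2 v, h3 v⟩⟩
  have hd0 : ∀ v, d0 v ∈ Sp (α 0) (β 0) := fun v => (hdec v).1
  have hd1 : ∀ v, d1 v ∈ Sp (α 1) (β 1) := fun v => (hdec v).2.1
  have hdv : ∀ v, padd (d0 v) (d1 v) = v := fun v => (hdec v).2.2
  have huniq : ∀ v x y, x ∈ Sp (α 0) (β 0) → y ∈ Sp (α 1) (β 1) → padd x y = v →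
      x = d0 v ∧ y = d1 v := fun v x y hx hy he =>
    dec_unique g0 g1 hd01 hx hy (hd0 v) (hd1 v) (he.trans (hdv v).symm)
  set Q : V → Bool := fun v => omg (d0 v) (d1 v) with hQdef
  have hdadd : ∀ u v, d0 (padd u v) = padd (d0 u) (d0 v) ∧ d1 (padd u v) = padd (d1 u) (d1 v) := by
    intro u v
    have h := huniq (padd u v) _ _ (CL _ _ _ _ (hd0 u) (hd0 v)) (CL _ _ _ _ (hd1 u) (hd1 v))
      (by rw [padd_padd_comm, hdv, hdv])
    exact ⟨h.1.symm, h.2.symm⟩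
  -- isotropy facts
  have hiso0 : ∀ u v, omg (d0 u) (d0 v) = false := fun u v =>
    Sp_comm g0.2.2.2 (hd0 u) (hd0 v)
  have hiso1 : ∀ u v, omg (d1 u) (d1 v) = false := fun u v =>
    Sp_comm g1.2.2.2 (hd1 u) (hd1 v)
  -- cross-term identity : xor (omg (d0 u) (d1 v)) (omg (d0 v) (d1 u)) = omg u v
  have hcross : ∀ u v, xor (omg (d0 u) (d1 v)) (omg (d0 v) (d1 u)) = omg u v := by
    intro u v
    conv_rhs => rw [← hdv u, ← hdv v]
    rw [omg_add_left, omg_add_right, omg_add_right, hiso0, hiso1, omg_symm (d1 u) (d0 v)]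
    cases omg (d0 u) (d1 v) <;> cases omg (d0 v) (d1 u) <;> rfl
  have hQadd : ∀ u v, pcomm u v → Q (padd u v) = xor (Q u) (Q v) := by
    intro u v huv
    show omg (d0 (padd u v)) (d1 (padd u v)) = _
    rw [(hdadd u v).1, (hdadd u v).2, omg_add_left, omg_add_right, omg_add_right]
    have hc : xor (omg (d0 u) (d1 v)) (omg (d0 v) (d1 u)) = false := by
      rw [hcross]; exact huv
    exact xor4 _ _ _ _ hc
  -- elements of A i (i ≥ 2) are outside both spans
  have hout : ∀ (i : Fin 4), i ≠ 0 → i ≠ 1 → ∀ v ∈ A i,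
      v ∉ Sp (α 0) (β 0) ∧ v ∉ Sp (α 1) (β 1) := by
    intro i hi0 hi1 v hv
    constructor
    · intro hin
      rcases (mem_Sp_iff_Pl g0).mp hin with h | h
      · exact hnz i (h ▸ hv)
      · exact hdisj i 0 hi0 v hv (by rw [hA 0]; exact h)
    · intro hin
      rcases (mem_Sp_iff_Pl g1).mp hin with h | h
      · exact hnz i (h ▸ hv)
      · exact hdisj i 1 hi1 v hv (by rw [hA 1]; exact h)
  have hcomp : ∀ v, v ∉ Sp (α 0) (β 0) → v ∉ Sp (α 1) (β 1) → d0 v ≠ 0 ∧ d1 v ≠ 0 := by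
    intro v h0 h1
    constructor
    · intro hz
      apply h1; rw [← hdv v, hz, zero_padd]; exact hd1 v
    · intro hz
      apply h0; rw [← hdv v, hz, padd_zero]; exact hd0 v
  -- every plane has an element with Q = false
  have hQplane : ∀ i : Fin 4, ∃ x ∈ A i, Q x = false := by
    intro i
    by_cases hu : Q (α i) = false
    · exact ⟨α i, by rw [hA i]; exact mem_Pl.mpr (Or.inl rfl), hu⟩
    by_cases hv : Q (β i) = false
    · exact ⟨β i, by rw [hA i]; exact mem_Pl.mpr (Or.inr (Or.inl rfl)), hv⟩
    refine ⟨padd (α i) (β i), by rw [hA i]; exact mem_Pl.mpr (Or.inr (Or.inr rfl)), ?_⟩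
    rw [hQadd _ _ (hg i).2.2.2]
    rw [Bool.not_eq_false] at hu hv
    rw [hu, hv]; rfl
  -- the elements of A 2
  have g2 := hg 2
  have hu2 : α 2 ∈ A 2 := by rw [hA 2]; exact mem_Pl.mpr (Or.inl rfl)
  have hv2 : β 2 ∈ A 2 := by rw [hA 2]; exact mem_Pl.mpr (Or.inr (Or.inl rfl))
  have hw2 : padd (α 2) (β 2) ∈ A 2 := by rw [hA 2]; exact mem_Pl.mpr (Or.inr (Or.inr rfl))
  -- general membership of components
  have hmem0 : ∀ (i : Fin 4), i ≠ 0 → i ≠ 1 → ∀ x ∈ A i, d0 x ∈ A 0 ∧ d1 x ∈ A 1 := by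
    intro i hi0 hi1 x hx
    have hox := hout i hi0 hi1 x hx
    have hcx := hcomp x hox.1 hox.2
    constructor
    · rcases (mem_Sp_iff_Pl g0).mp (hd0 x) with h | h
      · exact absurd h hcx.1
      · rw [hA 0]; exact h
    · rcases (mem_Sp_iff_Pl g1).mp (hd1 x) with h | h
      · exact absurd h hcx.2
      · rw [hA 1]; exact h
  -- exclusion: not all of A 2 has Q = false
  have hexcl : ¬ (∀ x ∈ A 2, Q x = false) := by
    intro hQ0
    set u := α 2 with hudef
    set v := β 2 with hvdef
    have hout2 := hout 2 (by decide) (by decide)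
    have hcu := hcomp u (hout2 u hu2).1 (hout2 u hu2).2
    have hcv := hcomp v (hout2 v hv2).1 (hout2 v hv2).2
    have hd0uv : d0 u ≠ d0 v := by
      intro he
      have h : padd u v = padd (d1 u) (d1 v) := by
        conv_lhs => rw [← hdv u, ← hdv v]
        rw [padd_padd_comm, ← he, padd_self, zero_padd]
      exact (hout2 _ hw2).2 (h ▸ CL _ _ _ _ (hd1 u) (hd1 v))
    have hw0 : d0 (padd u v) = padd (d0 u) (d0 v) := (hdadd u v).1
    have hw1 : d1 (padd u v) = padd (d1 u) (d1 v) := (hdadd u v).2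
    have hq_u : omg (d0 u) (d1 u) = false := hQ0 u hu2
    have hq_v : omg (d0 v) (d1 v) = false := hQ0 v hv2
    -- A 0 and A 1 are exactly the components
    have hA0eq : A 0 = {d0 u, d0 v, d0 (padd u v)} := by
      symm
      apply Finset.eq_of_subset_of_card_le
      · intro z hz
        simp only [Finset.mem_insert, Finset.mem_singleton] at hz
        rcases hz with rfl | rfl | rfl
        · exact (hmem0 2 (by decide) (by decide) u hu2).1
        · exact (hmem0 2 (by decide) (by decide) v hv2).1
        · exact (hmem0 2 (by decide) (by decide) _ hw2).1
      · rw [hcard 0]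
        rw [Finset.card_insert_of_notMem, Finset.card_insert_of_notMem, Finset.card_singleton]
        · simp only [Finset.mem_singleton]
          rw [hw0, padd_comm]
          exact Ne.symm (padd_left_ne hcu.1)
        · simp only [Finset.mem_insert, Finset.mem_singleton]
          push_neg
          exact ⟨hd0uv, by rw [hw0]; exact Ne.symm (padd_left_ne hcv.1)⟩
    have hd1uv : d1 u ≠ d1 v := by
      intro he
      have h : padd u v = padd (d0 u) (d0 v) := by
        conv_lhs => rw [← hdv u, ← hdv v]
        rw [padd_padd_comm, ← he, padd_self, padd_zero]
      exact (hout2 _ hw2).1 (h ▸ CL _ _ _ _ (hd0 u) (hd0 v))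
    have hA1eq : A 1 = {d1 u, d1 v, d1 (padd u v)} := by
      symm
      apply Finset.eq_of_subset_of_card_le
      · intro z hz
        simp only [Finset.mem_insert, Finset.mem_singleton] at hz
        rcases hz with rfl | rfl | rfl
        · exact (hmem0 2 (by decide) (by decide) u hu2).2
        · exact (hmem0 2 (by decide) (by decide) v hv2).2
        · exact (hmem0 2 (by decide) (by decide) _ hw2).2
      · rw [hcard 1]
        rw [Finset.card_insert_of_notMem, Finset.card_insert_of_notMem, Finset.card_singleton]
        · simp only [Finset.mem_singleton]
          rw [hw1, padd_comm]
          exact Ne.symm (padd_left_ne hcu.2)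
        · simp only [Finset.mem_insert, Finset.mem_singleton]
          push_neg
          exact ⟨hd1uv, by rw [hw1]; exact Ne.symm (padd_left_ne hcv.2)⟩
    -- nondegeneracy
    have hkey : ∀ x0, x0 ∈ Sp (α 0) (β 0) → omg x0 (d1 u) = false → omg x0 (d1 v) = false →
        x0 = 0 := by
      intro x0 hx0 h1 h2
      apply L4
      intro y
      have hy := hdv y
      rw [show pcomm x0 y ↔ pcomm x0 (padd (d0 y) (d1 y)) by rw [hy]]
      apply L3
      · exact Sp_comm g0.2.2.2 hx0 (hd0 y)
      · rcases (mem_Sp_iff_Pl g1).mp (hd1 y) with h | h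
        · rw [h]; exact Lsym (Lzero x0)
        · rw [← hA 1, hA1eq] at h
          simp only [Finset.mem_insert, Finset.mem_singleton] at h
          rcases h with h | h | h <;> rw [h]
          · exact h1
          · exact h2
          · rw [hw1]; exact L3 h1 h2
    have hn_uv : omg (d0 u) (d1 v) = true := by
      by_contra h
      rw [Bool.not_eq_true] at h
      exact hcu.1 (hkey (d0 u) (hd0 u) hq_u h)
    have hn_vu : omg (d0 v) (d1 u) = true := by
      by_contra h
      rw [Bool.not_eq_true] at h
      exact hcv.1 (hkey (d0 v) (hd0 v) h hq_v)
    -- use A 3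
    obtain ⟨x, hx3, hQx⟩ := hQplane 3
    have hx0A : d0 x ∈ A 0 := (hmem0 3 (by decide) (by decide) x hx3).1
    have hx1A : d1 x ∈ A 1 := (hmem0 3 (by decide) (by decide) x hx3).2
    rw [hA0eq] at hx0A
    rw [hA1eq] at hx1A
    simp only [Finset.mem_insert, Finset.mem_singleton] at hx0A hx1A
    have hQx' : omg (d0 x) (d1 x) = false := hQx
    have hxeq : ∀ w', w' ∈ A 2 → d0 x = d0 w' → d1 x = d1 w' → False := by
      intro w' hw' e0 e1
      have : x = w' := by rw [← hdv x, e0, e1, hdv w']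
      exact hdisj 3 2 (by decide) x hx3 (this ▸ hw')
    rcases hx0A with h0 | h0 | h0 <;> rcases hx1A with h1 | h1 | h1
    · exact hxeq u hu2 h0 h1
    · rw [h0, h1, hn_uv] at hQx'; exact absurd hQx' (by decide)
    · rw [h0, h1, hw1, omg_add_right, hq_u, hn_uv] at hQx'; exact absurd hQx' (by decide)
    · rw [h0, h1, hn_vu] at hQx'; exact absurd hQx' (by decide)
    · exact hxeq v hv2 h0 h1
    · rw [h0, h1, hw1, omg_add_right, hn_vu, hq_v] at hQx'; exact absurd hQx' (by decide)
    · rw [h0, h1, hw0, omg_add_left, hq_u, hn_vu] at hQx'; exact absurd hQx' (by decide)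
    · rw [h0, h1, hw0, omg_add_left, hn_uv, hq_v] at hQx'; exact absurd hQx' (by decide)
    · exact hxeq _ hw2 (by rw [h0, hw0]) (by rw [h1, hw1])
  -- exactly one zero on A 2
  obtain ⟨x2, hx2A, hQx2⟩ := hQplane 2
  have huniq2 : ∀ y ∈ A 2, Q y = false → y = x2 := by
    intro y hy hQy
    by_contra hne
    apply hexcl
    intro z hz
    by_cases h1 : z = y
    · rw [h1]; exact hQy
    by_cases h2 : z = x2
    · rw [h2]; exact hQx2
    have hz3 : z = padd y x2 :=
      L1 y x2 z (fun h => hnz 2 (h ▸ hy)) (fun h => hnz 2 (h ▸ hx2A)) (fun h => hnz 2 (h ▸ hz))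
        hne h1 h2 (hcomm 2 y hy x2 hx2A) (hcomm 2 y hy z hz)
        (hcomm 2 x2 hx2A z hz)
    rw [hz3, hQadd y x2 (hcomm 2 y hy x2 hx2A), hQy, hQx2]
    rfl
  -- build t
  have hox2 := hout 2 (by decide) (by decide) x2 hx2A
  have hcx2 := hcomp x2 hox2.1 hox2.2
  have hx0 : d0 x2 ∈ A 0 := (hmem0 2 (by decide) (by decide) x2 hx2A).1
  have hx1 : d1 x2 ∈ A 1 := (hmem0 2 (by decide) (by decide) x2 hx2A).2
  have hc01 : pcomm (d0 x2) (d1 x2) := hQx2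
  have hc02 : pcomm (d0 x2) x2 := by
    rw [show pcomm (d0 x2) x2 ↔ pcomm (d0 x2) (padd (d0 x2) (d1 x2)) by rw [hdv]]
    exact L3 (Lself _) hc01
  have hc12 : pcomm (d1 x2) x2 := by
    rw [show pcomm (d1 x2) x2 ↔ pcomm (d1 x2) (padd (d0 x2) (d1 x2)) by rw [hdv]]
    exact L3 (Lsym hc01) (Lself _)
  have hne01 : d0 x2 ≠ d1 x2 := fun h => hdisj 0 1 (by decide) _ hx0 (h ▸ hx1)
  have hne02 : d0 x2 ≠ x2 := fun h => hdisj 2 0 (by decide) _ hx2A (h ▸ hx0)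
  have hne12 : d1 x2 ≠ x2 := fun h => hdisj 2 1 (by decide) _ hx2A (h ▸ hx1)
  refine ⟨{d0 x2, d1 x2, x2}, ⟨?_, ?_, ?_, ?_, ?_, ?_, ?_⟩, ?_⟩
  · rw [Finset.card_insert_of_notMem, Finset.card_insert_of_notMem, Finset.card_singleton]
    · simp only [Finset.mem_singleton]; exact hne12
    · simp only [Finset.mem_insert, Finset.mem_singleton]; push_neg; exact ⟨hne01, hne02⟩
  · simp only [Finset.mem_insert, Finset.mem_singleton]
    push_neg
    exact ⟨Ne.symm hcx2.1, Ne.symm hcx2.2, fun h => hnz 2 (h ▸ hx2A)⟩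
  · intro p hp q hq
    simp only [Finset.mem_insert, Finset.mem_singleton] at hp hq
    rcases hp with rfl | rfl | rfl <;> rcases hq with rfl | rfl | rfl <;>
      first
        | exact Lself _ | exact hc01 | exact hc02 | exact hc12
        | exact Lsym hc01 | exact Lsym hc02 | exact Lsym hc12
  · intro z hz
    simp only [Finset.mem_insert, Finset.mem_singleton] at hz
    simp only [Finset.mem_union]
    rcases hz with rfl | rfl | rfl
    · exact Or.inl (Or.inl hx0)
    · exact Or.inl (Or.inr hx1)
    · exact Or.inr hx2A
  · intro h
    have : d1 x2 ∈ A 0 := by rw [← h]; simp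
    exact hdisj 1 0 (by decide) _ hx1 this
  · intro h
    have : d0 x2 ∈ A 1 := by rw [← h]; simp
    exact hdisj 0 1 (by decide) _ hx0 this
  · intro h
    have : d0 x2 ∈ A 2 := by rw [← h]; simp
    exact hdisj 0 2 (by decide) _ hx0 this
  -- uniqueness
  intro t' ht'good
  obtain ⟨h3', h0', hc', hsub', hne0, hne1, hne2⟩ := ht'good
  obtain ⟨a', b', g', ht'⟩ := triple_repr t' h3' h0' hc'
  have htwo : ∀ (i : Fin 4), t' ≠ A i → ∀ p ∈ t', ∀ q ∈ t', p ≠ q → p ∈ A i → q ∈ A i →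
      False := by
    intro i hnei p hp q hq hpq hpA hqA
    have hpad : padd p q ∈ A i := by
      rw [hA i] at hpA hqA ⊢
      exact Pl_add (hg i) hpA hqA hpq
    have hsub2 : t' ⊆ A i := by
      intro z hz
      by_cases h1 : z = p
      · rw [h1]; exact hpA
      by_cases h2 : z = q
      · rw [h2]; exact hqA
      have : z = padd p q :=
        L1 p q z (fun h => h0' (h ▸ hp)) (fun h => h0' (h ▸ hq)) (fun h => h0' (h ▸ hz))
          hpq h1 h2 (hc' p hp q hq) (hc' p hp z hz) (hc' q hq z hz)
      rw [this]; exact hpad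
    exact hnei (Finset.eq_of_subset_of_card_le hsub2 (by rw [hcard i, h3']))
  have hclass : ∀ z ∈ t', z ∈ A 0 ∨ z ∈ A 1 ∨ z ∈ A 2 := by
    intro z hz
    have := hsub' hz
    simp only [Finset.mem_union] at this
    tauto
  have hat : a' ∈ t' := by rw [ht']; exact mem_Pl.mpr (Or.inl rfl)
  have hbt : b' ∈ t' := by rw [ht']; exact mem_Pl.mpr (Or.inr (Or.inl rfl))
  have hct : padd a' b' ∈ t' := by rw [ht']; exact mem_Pl.mpr (Or.inr (Or.inr rfl))
  have hab' : a' ≠ b' := g'.2.2.1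
  have hac' : a' ≠ padd a' b' := Ne.symm (padd_left_ne g'.2.1)
  have hbc' : b' ≠ padd a' b' := by
    rw [padd_comm]; exact Ne.symm (padd_left_ne g'.1)
  have hfin : ∀ y0 y1 y2 : V, y0 ∈ t' → y1 ∈ t' → y2 ∈ t' → y0 ∈ A 0 → y1 ∈ A 1 → y2 ∈ A 2 →
      y2 = padd y0 y1 → t' = {d0 x2, d1 x2, x2} := by
    intro y0 y1 y2 hy0t hy1t hy2t hy0 hy1 hy2 hrel
    have hy0S : y0 ∈ Sp (α 0) (β 0) := (mem_Sp_iff_Pl g0).mpr (Or.inr (by rw [← hA 0]; exact hy0))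
    have hy1S : y1 ∈ Sp (α 1) (β 1) := (mem_Sp_iff_Pl g1).mpr (Or.inr (by rw [← hA 1]; exact hy1))
    obtain ⟨e0, e1⟩ := huniq y2 y0 y1 hy0S hy1S hrel.symm
    have hQy2 : Q y2 = false := by
      show omg (d0 y2) (d1 y2) = false
      rw [← e0, ← e1]
      exact hc' y0 hy0t y1 hy1t
    have hy2x2 : y2 = x2 := huniq2 y2 hy2 hQy2
    have hy0x : y0 = d0 x2 := by rw [e0, hy2x2]
    have hy1x : y1 = d1 x2 := by rw [e1, hy2x2]
    have hsub3 : ({d0 x2, d1 x2, x2} : Finset V) ⊆ t' := by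
      intro z hz
      simp only [Finset.mem_insert, Finset.mem_singleton] at hz
      rcases hz with rfl | rfl | rfl
      · rw [← hy0x]; exact hy0t
      · rw [← hy1x]; exact hy1t
      · rw [← hy2x2]; exact hy2t
    symm
    apply Finset.eq_of_subset_of_card_le hsub3
    rw [h3']
    rw [Finset.card_insert_of_notMem, Finset.card_insert_of_notMem, Finset.card_singleton]
    · simp only [Finset.mem_singleton]; exact hne12
    · simp only [Finset.mem_insert, Finset.mem_singleton]; push_neg; exact ⟨hne01, hne02⟩
  rcases hclass a' hat with ha | ha | ha <;> rcases hclass b' hbt with hb | hb | hb <;>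
    rcases hclass _ hct with hc | hc | hc <;>
    first
      | exact (htwo 0 hne0 _ hat _ hbt hab' ha hb).elim
      | exact (htwo 0 hne0 _ hat _ hct hac' ha hc).elim
      | exact (htwo 0 hne0 _ hbt _ hct hbc' hb hc).elim
      | exact (htwo 1 hne1 _ hat _ hbt hab' ha hb).elim
      | exact (htwo 1 hne1 _ hat _ hct hac' ha hc).elim
      | exact (htwo 1 hne1 _ hbt _ hct hbc' hb hc).elim
      | exact (htwo 2 hne2 _ hat _ hbt hab' ha hb).elim
      | exact (htwo 2 hne2 _ hat _ hct hac' ha hc).elim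
      | exact (htwo 2 hne2 _ hbt _ hct hbc' hb hc).elim
      | exact hfin a' b' _ hat hbt hct ha hb hc rfl
      | exact hfin b' a' _ hbt hat hct hb ha hc (padd_comm a' b')
      | exact hfin a' _ b' hat hct hbt ha hc hb (padd_cancel a' b').symm
      | exact hfin _ a' b' hct hat hbt hc ha hb (by rw [padd_comm, padd_cancel])
      | exact hfin b' _ a' hbt hct hat hb hc ha (by rw [padd_comm a' b', padd_cancel])
      | exact hfin _ b' a' hct hbt hat hc hb ha (by rw [padd_comm (padd a' b') b', padd_comm a' b', padd_cancel])

-- ### bridge between words and V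
def ev : Fin 4 → ℕ := ![0,1,3,2]
def encw (a b : Fin 4) : V := ⟨(ev a + 4 * ev b) % 16, Nat.mod_lt _ (by norm_num)⟩

lemma bridge_comm : ∀ a b a' b' : Fin 4,
    ((ee a a' + ee b b') % 4 = (ee a' a + ee b' b) % 4) ↔ pcomm (encw a b) (encw a' b') := by
  decide

lemma bridge_inj : ∀ a b a' b' : Fin 4, encw a b = encw a' b' → a = a' ∧ b = b' := by decide

lemma bridge_zero : ∀ a b : Fin 4, encw a b = 0 ↔ (a = 0 ∧ b = 0) := by decide

def wv (c : Wd) : V := encw (c 0) (c 1)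

lemma wv_inj : Function.Injective wv := by
  intro c c' h
  obtain ⟨h1, h2⟩ := bridge_inj _ _ _ _ h
  funext j
  fin_cases j
  · exact h1
  · exact h2

-- powers of I
lemma I_pow_mod (n : ℕ) : Complex.I ^ n = Complex.I ^ (n % 4) := by
  conv_lhs => rw [← Nat.div_add_mod n 4]
  rw [pow_add, pow_mul]
  norm_num [Complex.I_pow_four]

lemma I_pow_inj {m k : ℕ} (h : Complex.I ^ m = Complex.I ^ k) : m % 4 = k % 4 := by
  rw [I_pow_mod m, I_pow_mod k] at h
  have hm : m % 4 < 4 := Nat.mod_lt _ (by norm_num)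
  have hk : k % 4 < 4 := Nat.mod_lt _ (by norm_num)
  interval_cases hm' : m % 4 <;> interval_cases hk' : k % 4 <;>
    first
      | rfl
      | (exfalso; revert h; norm_num [pow_succ, Complex.ext_iff])

lemma smul_cancel {k k' : ℂ} {A : Matrix (Fin 2 → Fin 2) (Fin 2 → Fin 2) ℂ}
    (hA : A ≠ 0) (h : k • A = k' • A) : k = k' := by
  by_contra hne
  apply hA
  have : (k - k') • A = 0 := by rw [sub_smul, h, sub_self]
  rcases smul_eq_zero.mp this with h' | h'
  · exact absurd (sub_eq_zero.mp h') hne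
  · exact h'

lemma madd_comm : ∀ a b : Fin 4, madd a b = madd b a := by decide

lemma Mw_commute_iff (c c' : Wd) :
    Mw c * Mw c' = Mw c' * Mw c ↔ pcomm (wv c) (wv c') := by
  simp only [wv]
  rw [← bridge_comm]
  constructor
  · intro h
    rw [Mw_mul, Mw_mul] at h
    have hcc : wadd c c' = wadd c' c := by
      funext j
      show madd (c j) (c' j) = madd (c' j) (c j)
      exact madd_comm (c j) (c' j)
    rw [hcc] at h
    exact I_pow_inj (smul_cancel (Mw_ne_zero _) h)
  · intro h
    rw [Mw_mul, Mw_mul]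
    have hcc : wadd c c' = wadd c' c := by
      funext j
      exact madd_comm (c j) (c' j)
    rw [hcc, I_pow_mod, I_pow_mod (ee (c' 0) (c 0) + ee (c' 1) (c 1)), h]

lemma pm_is_pauli : ∀ a : Fin 4, pm a = pI ∨ pm a = pX ∨ pm a = pY ∨ pm a = pZ := by
  intro a
  fin_cases a
  · left; rfl
  · right; left; rfl
  · right; right; left; rfl
  · right; right; right; rfl

lemma pauli_exists_word {W : Matrix (Fin 2) (Fin 2) ℂ}
    (h : W = pI ∨ W = pX ∨ W = pY ∨ W = pZ) : ∃ a : Fin 4, W = pm a := by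
  rcases h with h | h | h | h
  · exact ⟨0, h⟩
  · exact ⟨1, h⟩
  · exact ⟨2, h⟩
  · exact ⟨3, h⟩

lemma Mw_one : Mw (fun _ => 0) = 1 := by
  ext v w
  show (kron 2 fun _ => pm 0) v w = _
  have hpm : pm 0 = 1 := rfl
  simp only [kron, hpm, Fin.prod_univ_two, Matrix.one_apply]
  by_cases h : v = w
  · subst h; simp
  · have : v 0 ≠ w 0 ∨ v 1 ≠ w 1 := by
      by_contra hc
      push_neg at hc
      apply h
      funext j
      fin_cases j
      · exact hc.1
      · exact hc.2
    rw [if_neg h]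
    rcases this with h' | h'
    · rw [if_neg h', zero_mul]
    · rw [if_neg h', mul_zero]


lemma pauli_word {U : QMat 2} (h : IsPauliOp 2 U) : ∃ c : Wd, U = Mw c := by
  obtain ⟨W, hW, rfl⟩ := h
  have hW' : ∀ j, ∃ a, W j = pm a := fun j => pauli_exists_word (hW j)
  choose c hc using hW'
  exact ⟨c, by rw [Mw, show W = (fun j => pm (c j)) from funext hc]⟩

/-- the word of a Pauli operator -/
noncomputable def wdf (U : QMat 2) : V :=
  if h : ∃ c : Wd, U = Mw c then wv h.choose else 0

lemma wdf_Mw (c : Wd) : wdf (Mw c) = wv c := by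
  have h : ∃ c' : Wd, Mw c = Mw c' := ⟨c, rfl⟩
  rw [wdf, dif_pos h, ← Mw_inj h.choose_spec]

lemma phaseEq_iff {c c' : Wd} : PhaseEq (Mw c) (Mw c') ↔ c = c' := by
  constructor
  · intro h
    by_contra hne
    exact not_phaseEq_Mw c c' hne h
  · intro h
    exact ⟨1, one_ne_zero, by rw [h, one_smul]⟩

lemma phaseEq_refl (U : QMat 2) : PhaseEq U U := ⟨1, one_ne_zero, (one_smul ℂ U).symm⟩

lemma classPhaseEq_refl (C : Set (QMat 2)) : ClassPhaseEq C C :=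
  ⟨fun U hU => ⟨U, hU, phaseEq_refl U⟩, fun U hU => ⟨U, hU, phaseEq_refl U⟩⟩

lemma pauli_phase {U V : QMat 2} (hU : IsPauliOp 2 U) (hV : IsPauliOp 2 V)
    (h : PhaseEq U V) : U = V := by
  obtain ⟨c, rfl⟩ := pauli_word hU
  obtain ⟨c', rfl⟩ := pauli_word hV
  rw [phaseEq_iff.mp h]

lemma pauli_wdf_inj {U V : QMat 2} (hU : IsPauliOp 2 U) (hV : IsPauliOp 2 V)
    (h : wdf U = wdf V) : U = V := by
  obtain ⟨c, rfl⟩ := pauli_word hU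
  obtain ⟨c', rfl⟩ := pauli_word hV
  rw [wdf_Mw, wdf_Mw] at h
  rw [wv_inj h]

lemma pauli_wdf_zero {U : QMat 2} (hU : IsPauliOp 2 U) (h : wdf U = 0) : U = 1 := by
  obtain ⟨c, rfl⟩ := pauli_word hU
  rw [wdf_Mw] at h
  obtain ⟨h1, h2⟩ := (bridge_zero (c 0) (c 1)).mp h
  have hc : c = (fun _ => 0) := by
    funext j; fin_cases j <;> assumption
  rw [hc, Mw_one]

lemma pauli_comm_iff {U V : QMat 2} (hU : IsPauliOp 2 U) (hV : IsPauliOp 2 V) :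
    U * V = V * U ↔ pcomm (wdf U) (wdf V) := by
  obtain ⟨c, rfl⟩ := pauli_word hU
  obtain ⟨c', rfl⟩ := pauli_word hV
  rw [wdf_Mw, wdf_Mw]
  exact Mw_commute_iff c c'

/-- Given a complete set of five Pauli classes in dimension `d = 4`,
there is a unique (up to phase) maximal commuting Pauli class `T`, not equal up to
phase to any of `S 0`, `S 1`, `S 2`, all of whose members are equal up to phase to
members of `S 0 ∪ S 1 ∪ S 2`. -/
theorem unique_extra_class_d4 (S : Fin 5 → Set (QMat 2))
    (hmax : ∀ i, IsMaxClass 2 (S i))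
    (hdisj : ∀ i j, i ≠ j → ClassDisjoint (S i) (S j)) :
    ∃ T : Set (QMat 2),
      (IsMaxClass 2 T ∧
        (∀ U ∈ T, ∃ V ∈ S 0 ∪ S 1 ∪ S 2, PhaseEq U V) ∧
        (∀ i : Fin 5, i.val < 3 → ¬ ClassPhaseEq T (S i))) ∧
      ∀ T' : Set (QMat 2),
        (IsMaxClass 2 T' ∧
          (∀ U ∈ T', ∃ V ∈ S 0 ∪ S 1 ∪ S 2, PhaseEq U V) ∧
          (∀ i : Fin 5, i.val < 3 → ¬ ClassPhaseEq T' (S i))) →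
        ClassPhaseEq T T' := by
  classical
  have hfin : ∀ i, (S i).Finite := fun i => (hmax i).1
  set F : Fin 5 → Finset (QMat 2) := fun i => (hfin i).toFinset with hF
  have hFmem : ∀ i U, U ∈ F i ↔ U ∈ S i := fun i U => (hfin i).mem_toFinset
  have hFcard : ∀ i, (F i).card = 3 := by
    intro i
    have h := (hmax i).2.1
    rw [Set.ncard_eq_toFinset_card _ (hfin i)] at h
    exact h
  have hpau : ∀ i U, U ∈ S i → IsPauliOp 2 U := fun i U hU => ((hmax i).2.2.1 U hU).1
  have hne1 : ∀ i U, U ∈ S i → U ≠ 1 := fun i U hU => ((hmax i).2.2.1 U hU).2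
  set cst : Fin 4 → Fin 5 := fun i => ⟨i.val, by omega⟩ with hcst
  set A : Fin 4 → Finset V := fun i => (F (cst i)).image wdf with hA
  have hAmem : ∀ (i : Fin 4) (x : V), x ∈ A i ↔ ∃ U ∈ S (cst i), wdf U = x := by
    intro i x
    simp only [hA, Finset.mem_image, hFmem]
  have hAcard : ∀ i, (A i).card = 3 := by
    intro i
    rw [hA]
    rw [Finset.card_image_of_injOn, hFcard]
    intro U hU V hV h
    exact pauli_wdf_inj (hpau _ U ((hFmem _ U).mp hU)) (hpau _ V ((hFmem _ V).mp hV)) h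
  have hAnz : ∀ i, (0:V) ∉ A i := by
    intro i h
    obtain ⟨U, hU, hwd⟩ := (hAmem i 0).mp h
    exact hne1 _ U hU (pauli_wdf_zero (hpau _ U hU) hwd)
  have hAcomm : ∀ i, ∀ u ∈ A i, ∀ v ∈ A i, pcomm u v := by
    intro i u hu v hv
    obtain ⟨U, hU, rfl⟩ := (hAmem i u).mp hu
    obtain ⟨V, hV, rfl⟩ := (hAmem i v).mp hv
    exact (pauli_comm_iff (hpau _ U hU) (hpau _ V hV)).mp ((hmax _).2.2.2.1 U hU V hV)
  have hAdisj : ∀ i j : Fin 4, i ≠ j → ∀ x, x ∈ A i → x ∉ A j := by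
    intro i j hij x hxi hxj
    obtain ⟨U, hU, hU'⟩ := (hAmem i x).mp hxi
    obtain ⟨V, hV, hV'⟩ := (hAmem j x).mp hxj
    have hUV : U = V :=
      pauli_wdf_inj (hpau _ U hU) (hpau _ V hV) (by rw [hU', hV'])
    have hij5 : cst i ≠ cst j := by
      intro h
      apply hij
      apply Fin.ext
      have h2 : (cst i).val = (cst j).val := congrArg Fin.val h
      exact h2
    exact hdisj _ _ hij5 U hU V hV (hUV ▸ phaseEq_refl U)
  obtain ⟨t, htGood, htUniq⟩ := word_main A hAcard hAnz hAcomm hAdisj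
  obtain ⟨ht3, ht0, htc, htsub, htne0, htne1, htne2⟩ := htGood
  have hc0 : cst 0 = 0 := rfl
  have hc1 : cst 1 = 1 := rfl
  have hc2 : cst 2 = 2 := rfl
  -- the extra class
  set Ft : Finset (QMat 2) := (F 0 ∪ F 1 ∪ F 2).filter (fun U => wdf U ∈ t) with hFt
  have hFtmem : ∀ U, U ∈ Ft ↔ (U ∈ S 0 ∨ U ∈ S 1 ∨ U ∈ S 2) ∧ wdf U ∈ t := by
    intro U
    simp only [hFt, Finset.mem_filter, Finset.mem_union, hFmem, or_assoc]
  have hFtpau : ∀ U ∈ Ft, IsPauliOp 2 U ∧ U ≠ 1 := by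
    intro U hU
    rcases ((hFtmem U).mp hU).1 with h | h | h
    · exact ⟨hpau 0 U h, hne1 0 U h⟩
    · exact ⟨hpau 1 U h, hne1 1 U h⟩
    · exact ⟨hpau 2 U h, hne1 2 U h⟩
  have hFtim : Ft.image wdf = t := by
    apply Finset.Subset.antisymm
    · intro x hx
      obtain ⟨U, hU, rfl⟩ := Finset.mem_image.mp hx
      exact ((hFtmem U).mp hU).2
    · intro x hx
      have hx3 := htsub hx
      simp only [Finset.mem_union] at hx3
      have key : ∀ i : Fin 4, x ∈ A i → (cst i = 0 ∨ cst i = 1 ∨ cst i = 2) →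
          x ∈ Ft.image wdf := by
        intro i hxi hor
        obtain ⟨U, hU, hU'⟩ := (hAmem i x).mp hxi
        refine Finset.mem_image.mpr ⟨U, (hFtmem U).mpr ⟨?_, hU' ▸ hx⟩, hU'⟩
        rcases hor with h | h | h
        · exact Or.inl (h ▸ hU)
        · exact Or.inr (Or.inl (h ▸ hU))
        · exact Or.inr (Or.inr (h ▸ hU))
      rcases hx3 with (h | h) | h
      · exact key 0 h (Or.inl hc0)
      · exact key 1 h (Or.inr (Or.inl hc1))
      · exact key 2 h (Or.inr (Or.inr hc2))
  have hFtinj : Set.InjOn wdf ↑Ft := by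
    intro U hU V hV h
    exact pauli_wdf_inj (hFtpau U hU).1 (hFtpau V hV).1 h
  have hFtcard : Ft.card = 3 := by
    rw [← ht3, ← hFtim, Finset.card_image_of_injOn hFtinj]
  -- final assembly
  refine ⟨↑Ft, ⟨⟨Ft.finite_toSet, ?_, ?_, ?_, ?_⟩, ?_, ?_⟩, ?_⟩
  · rw [Set.ncard_coe_finset, hFtcard]
    norm_num
  · intro U hU
    exact hFtpau U hU
  · intro U hU V hV
    have h1 := ((hFtmem U).mp hU).2
    have h2 := ((hFtmem V).mp hV).2
    exact (pauli_comm_iff (hFtpau U hU).1 (hFtpau V hV).1).mpr (htc _ h1 _ h2)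
  · intro U hU V hV hne hph
    exact hne (pauli_phase (hFtpau U hU).1 (hFtpau V hV).1 hph)
  · intro U hU
    refine ⟨U, ?_, phaseEq_refl U⟩
    rcases ((hFtmem U).mp hU).1 with h | h | h
    · exact Or.inl (Or.inl h)
    · exact Or.inl (Or.inr h)
    · exact Or.inr h
  · -- not class-phase-eq to S i for i < 3
    intro i hi hCP
    -- first: ↑Ft = S i
    have hsub1 : (↑Ft : Set (QMat 2)) ⊆ S i := by
      intro U hU
      obtain ⟨V, hV, hph⟩ := hCP.1 U hU
      rw [pauli_phase (hFtpau U hU).1 (hpau i V hV) hph]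
      exact hV
    have hsub2 : S i ⊆ ↑Ft := by
      intro V hV
      obtain ⟨U, hU, hph⟩ := hCP.2 V hV
      rwa [← pauli_phase (hFtpau U hU).1 (hpau i V hV) hph]
    have hSeq : (↑Ft : Set (QMat 2)) = S i := Set.Subset.antisymm hsub1 hsub2
    have hFeq : Ft = F i := by
      apply Finset.coe_injective
      rw [hSeq, hF]
      exact ((hfin i).coe_toFinset).symm
    -- so t = A i'
    have hival : i = 0 ∨ i = 1 ∨ i = 2 := by
      have hiv : i.val < 3 := hi
      rcases i with ⟨iv, hv⟩
      interval_cases iv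
      · exact Or.inl rfl
      · exact Or.inr (Or.inl rfl)
      · exact Or.inr (Or.inr rfl)
    rcases hival with rfl | rfl | rfl
    · exact htne0 (by rw [← hFtim, hFeq])
    · exact htne1 (by rw [← hFtim, hFeq])
    · exact htne2 (by rw [← hFtim, hFeq])
  · -- uniqueness
    rintro T' ⟨⟨hfin', hncard', hmem', hcomm', hphase'⟩, hsub', hnotcpe'⟩
    set F' : Finset (QMat 2) := hfin'.toFinset with hF'
    have hF'mem : ∀ U, U ∈ F' ↔ U ∈ T' := fun U => hfin'.mem_toFinset
    have hF'card : F'.card = 3 := by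
      have h := hncard'
      rw [Set.ncard_eq_toFinset_card _ hfin'] at h
      exact h
    have hT'S : ∀ U ∈ T', U ∈ S 0 ∨ U ∈ S 1 ∨ U ∈ S 2 := by
      intro U hU
      obtain ⟨Vv, hVv, hph⟩ := hsub' U hU
      have hVv' : Vv ∈ S 0 ∨ Vv ∈ S 1 ∨ Vv ∈ S 2 := by
        rcases hVv with (h | h) | h
        · exact Or.inl h
        · exact Or.inr (Or.inl h)
        · exact Or.inr (Or.inr h)
      have hVpau : IsPauliOp 2 Vv := by
        rcases hVv' with h | h | h
        · exact hpau 0 Vv h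
        · exact hpau 1 Vv h
        · exact hpau 2 Vv h
      rw [pauli_phase (hmem' U hU).1 hVpau hph]
      exact hVv'
    set t' : Finset V := F'.image wdf with ht'
    have ht'mem : ∀ x, x ∈ t' ↔ ∃ U ∈ T', wdf U = x := by
      intro x
      simp only [ht', Finset.mem_image, hF'mem]
    have hteqclass : ∀ (i : Fin 4) (i5 : Fin 5), cst i = i5 → t' = A i →
        ClassPhaseEq T' (S i5) := by
      intro i i5 hci h
      have hsub1 : T' ⊆ S i5 := by
        intro U hU
        have hwd : wdf U ∈ A i := h ▸ ((ht'mem _).mpr ⟨U, hU, rfl⟩)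
        obtain ⟨Vv, hVv, hwd'⟩ := (hAmem i _).mp hwd
        rw [← pauli_wdf_inj (hpau _ Vv hVv) (hmem' U hU).1 hwd']
        exact hci ▸ hVv
      have hsub2 : S i5 ⊆ T' := by
        intro Vv hVv
        have hVA : wdf Vv ∈ A i := (hAmem i _).mpr ⟨Vv, hci.symm ▸ hVv, rfl⟩
        rw [← h] at hVA
        obtain ⟨U, hU, hwd⟩ := (ht'mem _).mp hVA
        rwa [← pauli_wdf_inj (hmem' U hU).1 (hpau i5 Vv hVv) hwd]
      have hTeq : T' = S i5 := Set.Subset.antisymm hsub1 hsub2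
      rw [hTeq]
      exact classPhaseEq_refl _
    have ht'good : GoodT (A 0) (A 1) (A 2) t' := by
      refine ⟨?_, ?_, ?_, ?_, ?_, ?_, ?_⟩
      · rw [ht', Finset.card_image_of_injOn, hF'card]
        intro U hU V hV h
        exact pauli_wdf_inj (hmem' U ((hF'mem U).mp hU)).1 (hmem' V ((hF'mem V).mp hV)).1 h
      · intro h
        obtain ⟨U, hU, hwd⟩ := (ht'mem 0).mp h
        exact (hmem' U hU).2 (pauli_wdf_zero (hmem' U hU).1 hwd)
      · intro u hu v hv
        obtain ⟨U, hU, rfl⟩ := (ht'mem u).mp hu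
        obtain ⟨V, hV, rfl⟩ := (ht'mem v).mp hv
        exact (pauli_comm_iff (hmem' U hU).1 (hmem' V hV).1).mp (hcomm' U hU V hV)
      · intro x hx
        obtain ⟨U, hU, rfl⟩ := (ht'mem x).mp hx
        simp only [Finset.mem_union]
        rcases hT'S U hU with h | h | h
        · exact Or.inl (Or.inl ((hAmem 0 _).mpr ⟨U, hc0 ▸ h, rfl⟩))
        · exact Or.inl (Or.inr ((hAmem 1 _).mpr ⟨U, hc1 ▸ h, rfl⟩))
        · exact Or.inr ((hAmem 2 _).mpr ⟨U, hc2 ▸ h, rfl⟩)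
      · exact fun h => hnotcpe' 0 (by norm_num) (hteqclass 0 0 hc0 h)
      · exact fun h => hnotcpe' 1 (by norm_num) (hteqclass 1 1 hc1 h)
      · exact fun h => hnotcpe' 2 (by norm_num) (hteqclass 2 2 hc2 h)
    have ht'eq : t' = t := htUniq t' ht'good
    -- T' = ↑Ft
    have hTT' : T' = ↑Ft := by
      apply Set.Subset.antisymm
      · intro U hU
        have hwt : wdf U ∈ t := by
          rw [← ht'eq]
          exact (ht'mem _).mpr ⟨U, hU, rfl⟩
        exact (hFtmem U).mpr ⟨hT'S U hU, hwt⟩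
      · intro U hU
        have hwt : wdf U ∈ t' := by
          rw [ht'eq]
          exact ((hFtmem U).mp hU).2
        obtain ⟨V, hV, hwd⟩ := (ht'mem _).mp hwt
        rwa [← pauli_wdf_inj (hmem' V hV).1 (hFtpau U hU).1 hwd]
    rw [hTT']
    exact classPhaseEq_refl _
end
end

section
/- Let C₁ and C₂ be two classes belonging to a complete set of Pauli classes in dimension d = 4. Then there do not exist maximal commuting Pauli classes C₃′ and C₄′ such that C₁, C₂, C₃′, C₄′ are pairwise disjoint and the family {C₁, C₂, C₃′, C₄′} is unextendible; equivalently, any such family of four pairwise disjoint classes extends to a complete set of five pairwise disjoint maximal commuting Pauli classes. -/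
open Matrix

noncomputable section

/- ## single-qubit layer -/

def Pm : Fin 4 → Matrix (Fin 2) (Fin 2) ℂ := ![pI, pX, pY, pZ]
def sB (a b : Fin 4) : Bool := a == b || a == 0 || b == 0

set_option linter.unreachableTactic false in
set_option linter.unusedTactic false in
lemma P_mul_self (a : Fin 4) : Pm a * Pm a = 1 := by
  fin_cases a <;>
    · ext i j
      fin_cases i <;> fin_cases j <;>
        simp [Pm, pI, pX, pY, pZ, Matrix.mul_apply, Fin.sum_univ_two, Matrix.one_apply] <;>
        ring_nf <;> simp [Complex.I_sq]

set_option linter.unreachableTactic false in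
set_option linter.unusedTactic false in
lemma P_comm (a b : Fin 4) :
    Pm a * Pm b = (if sB a b then (1:ℂ) else -1) • (Pm b * Pm a) := by
  fin_cases a <;> fin_cases b <;>
    · ext i j
      fin_cases i <;> fin_cases j <;>
        simp [Pm, pI, pX, pY, pZ, sB, Matrix.mul_apply, Fin.sum_univ_two, Matrix.one_apply] <;>
        ring

set_option linter.unreachableTactic false in
set_option linter.unusedTactic false in
lemma traceP (a b : Fin 4) : trace (Pm a * Pm b) = if a = b then 2 else 0 := by
  fin_cases a <;> fin_cases b <;>
    simp [Pm, pI, pX, pY, pZ, Matrix.trace_fin_two, Matrix.mul_apply, Fin.sum_univ_two] <;>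
    ring_nf <;> simp [Complex.I_sq] <;> ring

lemma kron_trace (n : ℕ) (W : Fin n → Matrix (Fin 2) (Fin 2) ℂ) :
    trace (kron n W) = ∏ j, trace (W j) := by
  simp only [Matrix.trace, Matrix.diag, kron]
  rw [show (∏ j, ∑ x : Fin 2, W j x x) =
      ∑ u ∈ Fintype.piFinset (fun _ : Fin n => (Finset.univ : Finset (Fin 2))),
        ∏ j, W j (u j) (u j) from Finset.prod_univ_sum _ _]
  rw [Fintype.piFinset_univ]

lemma kron2_smul (x y : ℂ) (A B : Matrix (Fin 2) (Fin 2) ℂ) :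
    kron 2 ![x • A, y • B] = (x * y) • kron 2 ![A, B] := by
  ext v w
  simp [kron, Fin.prod_univ_two]
  ring

lemma kron2_eq (W : Fin 2 → Matrix (Fin 2) (Fin 2) ℂ) : kron 2 W = kron 2 ![W 0, W 1] := by
  have h : ![W 0, W 1] = W := by funext j; fin_cases j <;> simp
  rw [h]

lemma kron2_one : kron 2 ![pI, pI] = 1 := by
  ext v w
  simp only [kron, Fin.prod_univ_two, pI]
  by_cases h : v = w
  · subst h; simp [Matrix.one_apply]
  · have : v 0 ≠ w 0 ∨ v 1 ≠ w 1 := by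
      by_contra hc
      push_neg at hc
      exact h (funext fun j => by fin_cases j <;> simp [hc.1, hc.2])
    rcases this with h0 | h0 <;> simp [Matrix.one_apply, h0, h]

/- ## two-qubit Pauli words -/

def q (a b : Fin 4) : QMat 2 := kron 2 ![Pm a, Pm b]

lemma q_mul (a b c d : Fin 4) : q a b * q c d = kron 2 ![Pm a * Pm c, Pm b * Pm d] := by
  rw [q, q, kron_mul, kron2_eq]
  congr 1 <;> simp

lemma trace_q_mul (a b c d : Fin 4) :
    trace (q a b * q c d) = if a = c ∧ b = d then 4 else 0 := by
  rw [q_mul, kron_trace, Fin.prod_univ_two]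
  simp only [Matrix.cons_val_zero, Matrix.cons_val_one, Matrix.head_cons, traceP]
  by_cases h1 : a = c <;> by_cases h2 : b = d <;> simp [h1, h2] <;> norm_num

lemma q_sq (a b : Fin 4) : q a b * q a b = 1 := by
  rw [q_mul, P_mul_self, P_mul_self, ← pI, kron2_one]

lemma q_comm_rel (a b c d : Fin 4) :
    q a b * q c d =
      ((if sB a c then (1:ℂ) else -1) * (if sB b d then (1:ℂ) else -1)) • (q c d * q a b) := by
  rw [q_mul, q_mul, P_comm a c, P_comm b d, kron2_smul]

lemma phaseEq_q {a b c d : Fin 4} (h : PhaseEq (q a b) (q c d)) : a = c ∧ b = d := by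
  by_contra hne
  obtain ⟨e, he, heq⟩ := h
  have h4 : trace (q a b * q a b) = (4:ℂ) := by rw [trace_q_mul]; simp
  nth_rewrite 2 [heq] at h4
  rw [Matrix.mul_smul, Matrix.trace_smul, trace_q_mul, if_neg hne] at h4
  simp at h4

lemma q_inj {a b c d : Fin 4} (h : q a b = q c d) : a = c ∧ b = d :=
  phaseEq_q ⟨1, one_ne_zero, by simpa using h⟩

lemma q_ne_zero (a b : Fin 4) : q a b ≠ 0 := by
  intro h
  have h1 := q_sq a b
  rw [h, zero_mul] at h1
  have := congrArg Matrix.trace h1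
  simp [Matrix.trace_one] at this

lemma q_commute_iff (a b c d : Fin 4) :
    q a b * q c d = q c d * q a b ↔ sB a c = sB b d := by
  constructor
  · intro h
    by_contra hne
    have hrel := q_comm_rel a b c d
    have hsign : ((if sB a c then (1:ℂ) else -1) * (if sB b d then (1:ℂ) else -1)) = -1 := by
      cases hac : sB a c <;> cases hbd : sB b d <;> simp [hac, hbd] at hne ⊢
    rw [hsign, h] at hrel
    have h0 : (2 : ℂ) • (q c d * q a b) = 0 := by
      have h' : q c d * q a b + q c d * q a b = 0 := by
        nth_rewrite 1 [hrel]; simp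
      rw [two_smul]; exact h'
    have hz : q c d * q a b = 0 := by
      rcases smul_eq_zero.1 h0 with h' | h'
      · norm_num at h'
      · exact h'
    have : q a b = 0 := by
      calc q a b = (q c d * q c d) * q a b := by rw [q_sq]; simp
      _ = q c d * (q c d * q a b) := mul_assoc _ _ _
      _ = 0 := by rw [hz, mul_zero]
    exact q_ne_zero a b this
  · intro h
    have hrel := q_comm_rel a b c d
    rw [h] at hrel
    cases hbd : sB b d <;> rw [hbd] at hrel <;> simp at hrel <;> simpa using hrel

set_option linter.unreachableTactic false in
set_option linter.unusedTactic false in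
lemma isPauliOp_q (a b : Fin 4) : IsPauliOp 2 (q a b) := by
  refine ⟨![Pm a, Pm b], fun j => ?_, rfl⟩
  fin_cases j <;> simp <;> fin_cases a <;> fin_cases b <;> simp [Pm] <;> tauto

lemma pauliOp_eq_q {U : QMat 2} (h : IsPauliOp 2 U) : ∃ a b, U = q a b := by
  obtain ⟨W, hW, hU⟩ := h
  have getIdx : ∀ j, ∃ a : Fin 4, W j = Pm a := by
    intro j
    rcases hW j with h | h | h | h
    exacts [⟨0, by simp [Pm, h]⟩, ⟨1, by simp [Pm, h]⟩, ⟨2, by simp [Pm, h]⟩, ⟨3, by simp [Pm, h]⟩]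
  obtain ⟨a, ha⟩ := getIdx 0
  obtain ⟨b, hb⟩ := getIdx 1
  exact ⟨a, b, by rw [hU, kron2_eq, ha, hb]; rfl⟩

lemma q_zero_eq_one : q 0 0 = 1 := by
  rw [q]
  have : Pm 0 = pI := by simp [Pm]
  rw [show ![Pm 0, Pm 0] = ![pI, pI] by rw [this]]
  exact kron2_one

lemma q_eq_one_iff (a b : Fin 4) : q a b = 1 ↔ a = 0 ∧ b = 0 := by
  constructor
  · intro h
    exact q_inj (h.trans q_zero_eq_one.symm)
  · rintro ⟨rfl, rfl⟩
    exact q_zero_eq_one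

/- ## ℕ-encoded combinatorics -/

def sBN (a b : ℕ) : Bool := a == b || a == 0 || b == 0
def commN (x y : ℕ) : Bool := sBN (x/4) (y/4) == sBN (x%4) (y%4)

def lineP (a b c : ℕ) : Bool :=
  decide (a < b) && decide (b < c) && decide (c < 16) && decide (a ≠ 0) &&
    commN a b && commN a c && commN b c

def lines : List (ℕ × ℕ × ℕ) :=
  ((List.range 16).flatMap fun a => (List.range 16).flatMap fun b =>
    (List.range 16).map fun c => (a, b, c)).filter fun p => lineP p.1 p.2.1 p.2.2

def pts (l : ℕ × ℕ × ℕ) : List ℕ := [l.1, l.2.1, l.2.2]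

def disjL (l m : ℕ × ℕ × ℕ) : Bool := (pts l).all fun x => !((pts m).contains x)

def remL (l1 l2 l3 l4 : ℕ × ℕ × ℕ) : List ℕ :=
  (List.range 16).filter fun x =>
    decide (x ≠ 0) && !((pts l1 ++ pts l2 ++ pts l3 ++ pts l4).contains x)

def coreB : Bool :=
  lines.all fun l1 => lines.all fun l2 => !(disjL l1 l2) ||
    (lines.all fun l3 => !(disjL l1 l3 && disjL l2 l3) ||
      (lines.all fun l4 => !(disjL l1 l4 && disjL l2 l4 && disjL l3 l4) ||
        (match remL l1 l2 l3 l4 with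
          | [u, v, w] => commN u v && commN u w && commN v w
          | _ => false)))

set_option maxRecDepth 10000 in
lemma core_true : coreB = true := by decide

lemma mem_lines {a b c : ℕ} (h : lineP a b c = true) : (a, b, c) ∈ lines := by
  have hb : a < b ∧ b < c ∧ c < 16 := by
    simp [lineP] at h; omega
  simp only [lines, List.mem_filter, List.mem_flatMap, List.mem_map, List.mem_range]
  exact ⟨⟨a, by omega, b, by omega, c, by omega, rfl⟩, h⟩

lemma core_spec {l1 l2 l3 l4 : ℕ × ℕ × ℕ} (h1 : l1 ∈ lines) (h2 : l2 ∈ lines)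
    (h3 : l3 ∈ lines) (h4 : l4 ∈ lines)
    (d12 : disjL l1 l2 = true) (d13 : disjL l1 l3 = true) (d23 : disjL l2 l3 = true)
    (d14 : disjL l1 l4 = true) (d24 : disjL l2 l4 = true) (d34 : disjL l3 l4 = true) :
    (match remL l1 l2 l3 l4 with
      | [u, v, w] => commN u v && commN u w && commN v w
      | _ => false) = true := by
  have h := core_true
  simp only [coreB, List.all_eq_true, Bool.or_eq_true, Bool.not_eq_true',
    Bool.and_eq_true] at h
  have ha := (h l1 h1 l2 h2).resolve_left (by simp [d12])
  have hb := (ha l3 h3).resolve_left (by simp [d13, d23])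
  exact (hb l4 h4).resolve_left (by simp [d14, d24, d34])

lemma remL_nodup (l1 l2 l3 l4 : ℕ × ℕ × ℕ) : (remL l1 l2 l3 l4).Nodup :=
  (List.nodup_range : (List.range 16).Nodup).filter _

lemma mem_remL {x : ℕ} {l1 l2 l3 l4 : ℕ × ℕ × ℕ} :
    x ∈ remL l1 l2 l3 l4 ↔
      x < 16 ∧ x ≠ 0 ∧ x ∉ pts l1 ∧ x ∉ pts l2 ∧ x ∉ pts l3 ∧ x ∉ pts l4 := by
  simp [remL, List.mem_filter, and_comm, and_assoc]

lemma lineP_of_mem {l : ℕ × ℕ × ℕ} (h : l ∈ lines) : lineP l.1 l.2.1 l.2.2 = true :=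
  (List.mem_filter.1 h).2

lemma pts_lt {l : ℕ × ℕ × ℕ} (h : l ∈ lines) : ∀ y ∈ pts l, y < 16 ∧ y ≠ 0 := by
  have := lineP_of_mem h
  simp [lineP] at this
  intro y hy
  simp [pts] at hy
  rcases hy with rfl | rfl | rfl <;> omega

/- ## labels -/

def idx (a b : Fin 4) : ℕ := 4 * a.1 + b.1
def labA (x : ℕ) : Fin 4 := ⟨x / 4 % 4, Nat.mod_lt _ (by norm_num)⟩
def labB (x : ℕ) : Fin 4 := ⟨x % 4, Nat.mod_lt _ (by norm_num)⟩
def Q (x : ℕ) : QMat 2 := q (labA x) (labB x)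

lemma labA_idx (a b : Fin 4) : labA (idx a b) = a := by
  have ha := a.2; have hb := b.2
  apply Fin.ext; simp [labA, idx]; omega

lemma labB_idx (a b : Fin 4) : labB (idx a b) = b := by
  have ha := a.2; have hb := b.2
  apply Fin.ext; simp [labB, idx]

lemma idx_lab {x : ℕ} (h : x < 16) : idx (labA x) (labB x) = x := by
  simp [idx, labA, labB]; omega

lemma idx_lt (a b : Fin 4) : idx a b < 16 := by
  have ha := a.2; have hb := b.2; simp [idx]; omega

lemma idx_eq_zero {a b : Fin 4} : idx a b = 0 ↔ a = 0 ∧ b = 0 := by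
  have ha := a.2; have hb := b.2
  rw [Fin.ext_iff, Fin.ext_iff]
  show 4 * a.1 + b.1 = 0 ↔ a.1 = (0 : Fin 4).1 ∧ b.1 = (0 : Fin 4).1
  omega

lemma commN_idx (a b c d : Fin 4) : commN (idx a b) (idx c d) = true ↔ sB a c = sB b d := by
  revert a b c d; decide

lemma Q_idx (a b : Fin 4) : Q (idx a b) = q a b := by
  rw [Q, labA_idx, labB_idx]

lemma Q_inj {x y : ℕ} (hx : x < 16) (hy : y < 16) (h : PhaseEq (Q x) (Q y)) : x = y := by
  obtain ⟨hA, hB⟩ := phaseEq_q h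
  rw [← idx_lab hx, ← idx_lab hy, hA, hB]

lemma Q_commute {x y : ℕ} (h : commN x y = true) (hx : x < 16) (hy : y < 16) :
    Q x * Q y = Q y * Q x := by
  apply (q_commute_iff _ _ _ _).2
  rw [← idx_lab hx, ← idx_lab hy] at h
  exact (commN_idx _ _ _ _).1 h

lemma Q_ne_one {x : ℕ} (hx : x < 16) (h0 : x ≠ 0) : Q x ≠ 1 := by
  intro h
  obtain ⟨hA, hB⟩ := (q_eq_one_iff _ _).1 h
  exact h0 (by rw [← idx_lab hx, hA, hB]; rfl)

lemma sort3 (n1 n2 n3 : ℕ) (h12 : n1 ≠ n2) (h13 : n1 ≠ n3) (h23 : n2 ≠ n3) :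
    ∃ m1 m2 m3, m1 < m2 ∧ m2 < m3 ∧ ({m1, m2, m3} : Set ℕ) = {n1, n2, n3} := by
  rcases Nat.lt_trichotomy n1 n2 with h12' | h | h12'
  · rcases Nat.lt_trichotomy n2 n3 with h23' | h | h23'
    · exact ⟨n1, n2, n3, h12', h23', rfl⟩
    · exact absurd h h23
    · rcases Nat.lt_trichotomy n1 n3 with h13' | h | h13'
      · exact ⟨n1, n3, n2, h13', h23', by ext x; simp; tauto⟩
      · exact absurd h h13
      · exact ⟨n3, n1, n2, h13', h12', by ext x; simp; tauto⟩
  · exact absurd h h12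
  · rcases Nat.lt_trichotomy n1 n3 with h13' | h | h13'
    · exact ⟨n2, n1, n3, h12', h13', by ext x; simp; tauto⟩
    · exact absurd h h13
    · rcases Nat.lt_trichotomy n2 n3 with h23' | h | h23'
      · exact ⟨n2, n3, n1, h23', h13', by ext x; simp; tauto⟩
      · exact absurd h h23
      · exact ⟨n3, n2, n1, h23', h12', by ext x; simp; tauto⟩

/- ## classes → lines -/

lemma class_labels {C : Set (QMat 2)} (h : IsMaxClass 2 C) :
    ∃ l ∈ lines, (∀ x ∈ pts l, Q x ∈ C) ∧ (∀ U ∈ C, ∃ x ∈ pts l, U = Q x) := by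
  obtain ⟨hfin, hcard, hmem, hcomm, hph⟩ := h
  norm_num at hcard
  obtain ⟨U1, U2, U3, h12, h13, h23, hC⟩ := Set.ncard_eq_three.1 hcard
  have mem1 : U1 ∈ C := by rw [hC]; simp
  have mem2 : U2 ∈ C := by rw [hC]; simp
  have mem3 : U3 ∈ C := by rw [hC]; simp
  obtain ⟨a1, b1, e1⟩ := pauliOp_eq_q (hmem U1 mem1).1
  obtain ⟨a2, b2, e2⟩ := pauliOp_eq_q (hmem U2 mem2).1
  obtain ⟨a3, b3, e3⟩ := pauliOp_eq_q (hmem U3 mem3).1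
  set n1 := idx a1 b1 with hn1
  set n2 := idx a2 b2 with hn2
  set n3 := idx a3 b3 with hn3
  have Q1 : Q n1 = U1 := by rw [hn1, Q_idx, e1]
  have Q2 : Q n2 = U2 := by rw [hn2, Q_idx, e2]
  have Q3 : Q n3 = U3 := by rw [hn3, Q_idx, e3]
  have hQeq : ∀ x, (x = n1 ∨ x = n2 ∨ x = n3) → Q x ∈ C := by
    rintro x (rfl | rfl | rfl)
    · rw [Q1]; exact mem1
    · rw [Q2]; exact mem2
    · rw [Q3]; exact mem3
  have hne : n1 ≠ n2 ∧ n1 ≠ n3 ∧ n2 ≠ n3 := by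
    refine ⟨fun he => h12 ?_, fun he => h13 ?_, fun he => h23 ?_⟩
    · rw [← Q1, ← Q2, he]
    · rw [← Q1, ← Q3, he]
    · rw [← Q2, ← Q3, he]
  have hcN : ∀ x y, (x = n1 ∨ x = n2 ∨ x = n3) → (y = n1 ∨ y = n2 ∨ y = n3) →
      x ≠ y → commN x y = true := by
    have key : ∀ (U V : QMat 2) (a b c d : Fin 4), U ∈ C → V ∈ C → U = q a b → V = q c d →
        commN (idx a b) (idx c d) = true := by
      intro U V a b c d hU hV eU eV
      apply (commN_idx _ _ _ _).2
      apply (q_commute_iff _ _ _ _).1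
      rw [← eU, ← eV]
      exact hcomm U hU V hV
    rintro x y (rfl | rfl | rfl) (rfl | rfl | rfl) hxy <;>
      first
        | exact absurd rfl hxy
        | exact key _ _ _ _ _ _ mem1 mem2 e1 e2
        | exact key _ _ _ _ _ _ mem1 mem3 e1 e3
        | exact key _ _ _ _ _ _ mem2 mem1 e2 e1
        | exact key _ _ _ _ _ _ mem2 mem3 e2 e3
        | exact key _ _ _ _ _ _ mem3 mem1 e3 e1
        | exact key _ _ _ _ _ _ mem3 mem2 e3 e2
  have hnz : ∀ x, (x = n1 ∨ x = n2 ∨ x = n3) → x ≠ 0 := by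
    have key : ∀ (U : QMat 2) (a b : Fin 4), U ∈ C → U = q a b → idx a b ≠ 0 := by
      intro U a b hU eU h0
      obtain ⟨ha, hb⟩ := idx_eq_zero.1 h0
      exact (hmem U hU).2 (by rw [eU, ha, hb]; exact q_zero_eq_one)
    rintro x (rfl | rfl | rfl)
    · exact key _ _ _ mem1 e1
    · exact key _ _ _ mem2 e2
    · exact key _ _ _ mem3 e3
  have hlt : ∀ x, (x = n1 ∨ x = n2 ∨ x = n3) → x < 16 := by
    rintro x (rfl | rfl | rfl) <;> exact idx_lt _ _
  obtain ⟨m1, m2, m3, hm12, hm23, hset⟩ := sort3 n1 n2 n3 hne.1 hne.2.1 hne.2.2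
  have hmem' : ∀ x, (x = m1 ∨ x = m2 ∨ x = m3) → (x = n1 ∨ x = n2 ∨ x = n3) := by
    intro x hx
    have : x ∈ ({m1, m2, m3} : Set ℕ) := by simpa using hx
    rw [hset] at this
    simpa using this
  have hmem'' : ∀ x, (x = n1 ∨ x = n2 ∨ x = n3) → (x = m1 ∨ x = m2 ∨ x = m3) := by
    intro x hx
    have : x ∈ ({n1, n2, n3} : Set ℕ) := by simpa using hx
    rw [← hset] at this
    simpa using this
  have hlp : lineP m1 m2 m3 = true := by
    have c12 : commN m1 m2 = true :=
      hcN _ _ (hmem' m1 (by tauto)) (hmem' m2 (by tauto)) (Nat.ne_of_lt hm12)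
    have c13 : commN m1 m3 = true :=
      hcN _ _ (hmem' m1 (by tauto)) (hmem' m3 (by tauto)) (by omega)
    have c23 : commN m2 m3 = true :=
      hcN _ _ (hmem' m2 (by tauto)) (hmem' m3 (by tauto)) (Nat.ne_of_lt hm23)
    have hm3 : m3 < 16 := hlt _ (hmem' m3 (by tauto))
    have hm1 : m1 ≠ 0 := hnz _ (hmem' m1 (by tauto))
    simp [lineP, hm12, hm23, hm3, hm1, c12, c13, c23]
  refine ⟨(m1, m2, m3), mem_lines hlp, ?_, ?_⟩
  · intro x hx
    simp [pts] at hx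
    exact hQeq x (hmem' x hx)
  · intro U hU
    rw [hC] at hU
    simp at hU
    rcases hU with rfl | rfl | rfl
    · exact ⟨n1, by simpa [pts] using hmem'' n1 (by tauto), Q1.symm⟩
    · exact ⟨n2, by simpa [pts] using hmem'' n2 (by tauto), Q2.symm⟩
    · exact ⟨n3, by simpa [pts] using hmem'' n3 (by tauto), Q3.symm⟩

lemma mk_disjL {C D : Set (QMat 2)} {l m : ℕ × ℕ × ℕ}
    (hCl : ∀ x ∈ pts l, Q x ∈ C) (hDm : ∀ x ∈ pts m, Q x ∈ D)
    (hd : ClassDisjoint C D) : disjL l m = true := by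
  simp only [disjL, List.all_eq_true, Bool.not_eq_true']
  intro x hx
  rw [← Bool.not_eq_true]
  intro hc
  have hxm : x ∈ pts m := by simpa using hc
  exact hd (Q x) (hCl x hx) (Q x) (hDm x hxm) ⟨1, one_ne_zero, (one_smul _ _).symm⟩


lemma phaseEq_symm {m : Type*} {A B : Matrix m m ℂ} (h : PhaseEq A B) : PhaseEq B A := by
  obtain ⟨c, hc, rfl⟩ := h
  exact ⟨c⁻¹, inv_ne_zero hc, by rw [smul_smul, inv_mul_cancel₀ hc, one_smul]⟩

lemma classDisjoint_symm {n : ℕ} {C D : Set (QMat n)} (h : ClassDisjoint C D) :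
    ClassDisjoint D C := fun U hU V hV hp => h V hV U hU (phaseEq_symm hp)

lemma Q_ne {x y : ℕ} (hx : x < 16) (hy : y < 16) (hxy : x ≠ y) : Q x ≠ Q y :=
  fun h => hxy (Q_inj hx hy ⟨1, one_ne_zero, by simpa using h⟩)

/-- If `C₁ = S i` and `C₂ = S j` belong to a complete set of Pauli classes in
`d = 4`, then there are no maximal commuting Pauli classes `C₃'`, `C₄'` making
`{C₁, C₂, C₃', C₄'}` a pairwise disjoint unextendible family of four classes. -/
theorem no_unextendible_four_d4 (S : Fin 5 → Set (QMat 2))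
    (hmax : ∀ i, IsMaxClass 2 (S i))
    (hdisj : ∀ i j, i ≠ j → ClassDisjoint (S i) (S j))
    (i j : Fin 5) (hij : i ≠ j) :
    ¬ ∃ C₃' C₄' : Set (QMat 2), IsMaxClass 2 C₃' ∧ IsMaxClass 2 C₄' ∧
        ClassDisjoint C₃' (S i) ∧ ClassDisjoint C₃' (S j) ∧
        ClassDisjoint C₄' (S i) ∧ ClassDisjoint C₄' (S j) ∧
        ClassDisjoint C₃' C₄' ∧
        ¬ ∃ R : Set (QMat 2), IsMaxClass 2 R ∧
            ∀ U ∈ R, ∀ V ∈ S i ∪ S j ∪ C₃' ∪ C₄', ¬ PhaseEq U V := by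
  rintro ⟨C3, C4, h3, h4, d3i, d3j, d4i, d4j, d34, hnoR⟩
  obtain ⟨l1, hl1, hQ1, hU1⟩ := class_labels (hmax i)
  obtain ⟨l2, hl2, hQ2, hU2⟩ := class_labels (hmax j)
  obtain ⟨l3, hl3, hQ3, hU3⟩ := class_labels h3
  obtain ⟨l4, hl4, hQ4, hU4⟩ := class_labels h4
  have d12 := mk_disjL hQ1 hQ2 (hdisj i j hij)
  have d13 := mk_disjL hQ1 hQ3 (classDisjoint_symm d3i)
  have d23 := mk_disjL hQ2 hQ3 (classDisjoint_symm d3j)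
  have d14 := mk_disjL hQ1 hQ4 (classDisjoint_symm d4i)
  have d24 := mk_disjL hQ2 hQ4 (classDisjoint_symm d4j)
  have d34' := mk_disjL hQ3 hQ4 d34
  have hcore := core_spec hl1 hl2 hl3 hl4 d12 d13 d23 d14 d24 d34'
  have hnd := remL_nodup l1 l2 l3 l4
  rcases hrem : remL l1 l2 l3 l4 with _ | ⟨u, _ | ⟨v, _ | ⟨w, _ | ⟨z, t⟩⟩⟩⟩ <;>
    rw [hrem] at hcore hnd <;>
    [exact absurd hcore (by simp); exact absurd hcore (by simp);
     exact absurd hcore (by simp); skip; exact absurd hcore (by simp)]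
  simp only [Bool.and_eq_true] at hcore
  obtain ⟨⟨cuv, cuw⟩, cvw⟩ := hcore
  simp only [List.nodup_cons, List.mem_cons, List.mem_singleton, List.not_mem_nil,
    or_false, not_or, List.nodup_nil, and_true] at hnd
  obtain ⟨⟨huv, huw⟩, hvw, -⟩ := hnd
  have hu := mem_remL.1 (by rw [hrem]; simp : u ∈ remL l1 l2 l3 l4)
  have hv := mem_remL.1 (by rw [hrem]; simp : v ∈ remL l1 l2 l3 l4)
  have hw := mem_remL.1 (by rw [hrem]; simp : w ∈ remL l1 l2 l3 l4)
  apply hnoR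
  refine ⟨{Q u, Q v, Q w}, ⟨?_, ?_, ?_, ?_, ?_⟩, ?_⟩
  · exact (Set.finite_singleton _).insert _ |>.insert _
  · norm_num
    exact Set.ncard_eq_three.2 ⟨_, _, _, Q_ne hu.1 hv.1 huv, Q_ne hu.1 hw.1 huw,
      Q_ne hv.1 hw.1 hvw, rfl⟩
  · intro U hU
    simp only [Set.mem_insert_iff, Set.mem_singleton_iff] at hU
    rcases hU with rfl | rfl | rfl <;>
      exact ⟨isPauliOp_q _ _, by
        first
          | exact Q_ne_one hu.1 hu.2.1
          | exact Q_ne_one hv.1 hv.2.1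
          | exact Q_ne_one hw.1 hw.2.1⟩
  · intro U hU V hV
    simp only [Set.mem_insert_iff, Set.mem_singleton_iff] at hU hV
    rcases hU with rfl | rfl | rfl <;> rcases hV with rfl | rfl | rfl <;>
      first
        | rfl
        | exact Q_commute cuv hu.1 hv.1
        | exact (Q_commute cuv hu.1 hv.1).symm
        | exact Q_commute cuw hu.1 hw.1
        | exact (Q_commute cuw hu.1 hw.1).symm
        | exact Q_commute cvw hv.1 hw.1
        | exact (Q_commute cvw hv.1 hw.1).symm
  · intro U hU V hV hne hp
    simp only [Set.mem_insert_iff, Set.mem_singleton_iff] at hU hV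
    rcases hU with rfl | rfl | rfl <;> rcases hV with rfl | rfl | rfl <;>
      first
        | exact hne rfl
        | exact huv (Q_inj hu.1 hv.1 hp)
        | exact huv (Q_inj hv.1 hu.1 hp).symm
        | exact huw (Q_inj hu.1 hw.1 hp)
        | exact huw (Q_inj hw.1 hu.1 hp).symm
        | exact hvw (Q_inj hv.1 hw.1 hp)
        | exact hvw (Q_inj hw.1 hv.1 hp).symm
  · intro U hU V hV hp
    simp only [Set.mem_union] at hV
    have hxprops : ∃ x, U = Q x ∧ x < 16 ∧ x ∉ pts l1 ∧ x ∉ pts l2 ∧ x ∉ pts l3 ∧ x ∉ pts l4 := by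
      simp only [Set.mem_insert_iff, Set.mem_singleton_iff] at hU
      rcases hU with rfl | rfl | rfl
      · exact ⟨u, rfl, hu.1, hu.2.2⟩
      · exact ⟨v, rfl, hv.1, hv.2.2⟩
      · exact ⟨w, rfl, hw.1, hw.2.2⟩
    obtain ⟨x, rfl, hx16, hx1, hx2, hx3, hx4⟩ := hxprops
    have : ∃ y l', l' ∈ lines ∧ y ∈ pts l' ∧ V = Q y ∧ x ∉ pts l' := by
      rcases hV with ((hV | hV) | hV) | hV
      · obtain ⟨y, hy, rfl⟩ := hU1 V hV; exact ⟨y, l1, hl1, hy, rfl, hx1⟩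
      · obtain ⟨y, hy, rfl⟩ := hU2 V hV; exact ⟨y, l2, hl2, hy, rfl, hx2⟩
      · obtain ⟨y, hy, rfl⟩ := hU3 V hV; exact ⟨y, l3, hl3, hy, rfl, hx3⟩
      · obtain ⟨y, hy, rfl⟩ := hU4 V hV; exact ⟨y, l4, hl4, hy, rfl, hx4⟩
    obtain ⟨y, l', hl', hy, rfl, hxl⟩ := this
    have hy16 : y < 16 := (pts_lt hl' y hy).1
    exact hxl ((Q_inj hx16 hy16 hp) ▸ hy)
end
end

section
/- Let k ≤ 4 and let C₁,…,C_k be pairwise disjoint maximal commuting Pauli classes in dimension d = 8. Then there is no maximal commuting Pauli class S such that every member of S is equal up to phase to a member of C₁ ∪ ⋯ ∪ C_k and S is not equal up to phase (as a set of operators) to any of C₁,…,C_k. -/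
open Matrix

noncomputable section

namespace PauliAux

/-! ### Single qubit Pauli labels -/

abbrev Lbl := ZMod 2 × ZMod 2

def mat1 (p : Lbl) : Matrix (Fin 2) (Fin 2) ℂ :=
  if p = (0,0) then pI else if p = (1,0) then pX else if p = (1,1) then pY else pZ

def frobM {m : Type*} [Fintype m] (A B : Matrix m m ℂ) : ℂ :=
  ∑ v, ∑ w, star (A v w) * B v w

def eps1 (p q : Lbl) : ℂ := if p.1 * q.2 = q.1 * p.2 then 1 else -1

lemma pI_eq : pI = !![1,0;0,1] := by
  rw [pI]; ext i j; fin_cases i <;> fin_cases j <;> simp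

lemma Z2 : ∀ x : ZMod 2, x = 0 ∨ x = 1 := by decide

lemma frob1_eq (p q : Lbl) : frobM (mat1 p) (mat1 q) = if p = q then 2 else 0 := by
  obtain ⟨a,b⟩ := p; obtain ⟨c,d⟩ := q
  rcases Z2 a with rfl|rfl <;> rcases Z2 b with rfl|rfl <;> rcases Z2 c with rfl|rfl <;>
    rcases Z2 d with rfl|rfl <;>
    norm_num [mat1, frobM, Prod.ext_iff, pI_eq, pX, pY, pZ, Fin.sum_univ_two, Complex.ext_iff]

lemma mul_eps (p q : Lbl) : mat1 p * mat1 q = eps1 p q • (mat1 q * mat1 p) := by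
  obtain ⟨a,b⟩ := p; obtain ⟨c,d⟩ := q
  rcases Z2 a with rfl|rfl <;> rcases Z2 b with rfl|rfl <;> rcases Z2 c with rfl|rfl <;>
    rcases Z2 d with rfl|rfl <;>
    norm_num [mat1, Prod.ext_iff, eps1, pI_eq, pX, pY, pZ, Matrix.mul_fin_two]

lemma frob1_mul (p q : Lbl) : frobM (mat1 p * mat1 q) (mat1 p * mat1 q) = 2 := by
  obtain ⟨a,b⟩ := p; obtain ⟨c,d⟩ := q
  rcases Z2 a with rfl|rfl <;> rcases Z2 b with rfl|rfl <;> rcases Z2 c with rfl|rfl <;>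
    rcases Z2 d with rfl|rfl <;>
    norm_num [mat1, frobM, Prod.ext_iff, pI_eq, pX, pY, pZ, Matrix.mul_fin_two,
      Fin.sum_univ_two, Complex.ext_iff]

lemma exists_lbl {W : Matrix (Fin 2) (Fin 2) ℂ}
    (h : W = pI ∨ W = pX ∨ W = pY ∨ W = pZ) : ∃ p : Lbl, W = mat1 p := by
  rcases h with rfl|rfl|rfl|rfl
  exacts [⟨(0,0), by norm_num [mat1]⟩, ⟨(1,0), by norm_num [mat1, Prod.ext_iff]⟩,
    ⟨(1,1), by norm_num [mat1, Prod.ext_iff]⟩, ⟨(0,1), by norm_num [mat1, Prod.ext_iff]⟩]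

lemma mat1_cases (p : Lbl) : mat1 p = pI ∨ mat1 p = pX ∨ mat1 p = pY ∨ mat1 p = pZ := by
  obtain ⟨a,b⟩ := p
  rcases Z2 a with rfl|rfl <;> rcases Z2 b with rfl|rfl <;> simp [mat1, Prod.ext_iff]

lemma mat1_zero : mat1 0 = 1 := by norm_num [mat1, pI, Prod.ext_iff]

/-! ### Kronecker product algebra -/

lemma kron_mul (n : ℕ) (W W' : Fin n → Matrix (Fin 2) (Fin 2) ℂ) :
    kron n W * kron n W' = kron n (fun j => W j * W' j) := by
  ext v w
  rw [Matrix.mul_apply]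
  have : ∀ u : Fin n → Fin 2, kron n W v u * kron n W' u w
      = ∏ j, (W j (v j) (u j) * W' j (u j) (w j)) := by
    intro u; rw [kron, kron, ← Finset.prod_mul_distrib]
  simp_rw [this]
  rw [show (kron n fun j => W j * W' j) v w = ∏ j, ∑ x, W j (v j) x * W' j x (w j) by
    rw [kron]; exact Finset.prod_congr rfl fun j _ => Matrix.mul_apply]
  rw [← Finset.sum_prod_piFinset (Finset.univ) (fun j x => W j (v j) x * W' j x (w j)),
    Fintype.piFinset_univ]

lemma kron_frob (n : ℕ) (W W' : Fin n → Matrix (Fin 2) (Fin 2) ℂ) :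
    frobM (kron n W) (kron n W') = ∏ j, frobM (W j) (W' j) := by
  rw [frobM]
  have h1 : ∀ v : Fin n → Fin 2, ∑ w, star (kron n W v w) * kron n W' v w
      = ∏ j, ∑ x, star (W j (v j) x) * W' j (v j) x := by
    intro v
    rw [← Finset.sum_prod_piFinset (Finset.univ) (fun j x => star (W j (v j) x) * W' j (v j) x),
      Fintype.piFinset_univ]
    refine Finset.sum_congr rfl fun w _ => ?_
    rw [kron, kron, star_prod, ← Finset.prod_mul_distrib]
  simp_rw [h1]
  rw [← Fintype.piFinset_univ,
    Finset.sum_prod_piFinset (Finset.univ) (fun j y => ∑ x, star (W j y x) * W' j y x)]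
  exact Finset.prod_congr rfl fun j _ => rfl

lemma kron_smul (n : ℕ) (c : Fin n → ℂ) (W : Fin n → Matrix (Fin 2) (Fin 2) ℂ) :
    kron n (fun j => c j • W j) = (∏ j, c j) • kron n W := by
  ext v w
  simp [kron, Finset.prod_mul_distrib]

lemma kron_one (n : ℕ) : kron n (fun _ => (1 : Matrix (Fin 2) (Fin 2) ℂ)) = 1 := by
  ext v w
  rw [kron]
  by_cases h : v = w
  · subst h; simp [Matrix.one_apply]
  · rw [Matrix.one_apply_ne h]
    obtain ⟨j, hj⟩ := Function.ne_iff.mp h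
    exact Finset.prod_eq_zero (Finset.mem_univ j) (Matrix.one_apply_ne hj)

lemma frobM_smul {m : Type*} [Fintype m] (A B : Matrix m m ℂ) (c : ℂ) :
    frobM A (c • B) = c * frobM A B := by
  simp only [frobM, Matrix.smul_apply, smul_eq_mul, Finset.mul_sum]
  exact Finset.sum_congr rfl fun v _ => Finset.sum_congr rfl fun w _ => by ring

/-! ### Three-qubit Pauli operators via labels -/

abbrev G3 := Fin 3 → Lbl

def Kr (t : G3) : QMat 3 := kron 3 (fun j => mat1 (t j))

lemma frob_Kr (t s : G3) : frobM (Kr t) (Kr s) = if t = s then 8 else 0 := by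
  rw [Kr, Kr, kron_frob]
  simp_rw [frob1_eq]
  by_cases h : t = s
  · subst h; norm_num [Fin.prod_univ_three]
  · obtain ⟨j, hj⟩ := Function.ne_iff.mp h
    rw [if_neg h]
    exact Finset.prod_eq_zero (Finset.mem_univ j) (if_neg hj)

lemma Kr_phase {t s : G3} {c : ℂ} (hc : c ≠ 0) (h : Kr t = c • Kr s) : t = s := by
  by_contra hne
  have h1 : frobM (Kr s) (Kr t) = 0 := by
    rw [frob_Kr, if_neg (Ne.symm hne)]
  rw [h, frobM_smul, frob_Kr, if_pos rfl] at h1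
  exact hc (by simpa using h1)

lemma Kr_inj : Function.Injective Kr := fun t s h =>
  Kr_phase one_ne_zero (by rw [h, one_smul])

lemma Kr_phaseEq_iff {t s : G3} : PhaseEq (Kr t) (Kr s) ↔ t = s := by
  constructor
  · rintro ⟨c, hc, h⟩; exact Kr_phase hc h
  · rintro rfl; exact ⟨1, one_ne_zero, (one_smul _ _).symm⟩

lemma isPauliOp_iff_Kr (U : QMat 3) : IsPauliOp 3 U ↔ ∃ t : G3, U = Kr t := by
  constructor
  · rintro ⟨W, hW, rfl⟩
    choose p hp using fun j => exists_lbl (hW j)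
    exact ⟨p, by rw [Kr]; exact congrArg (kron 3) (funext fun j => hp j)⟩
  · rintro ⟨t, rfl⟩
    exact ⟨fun j => mat1 (t j), fun j => mat1_cases _, rfl⟩

lemma Kr_zero : Kr 0 = 1 := by
  rw [Kr]
  have : (fun j : Fin 3 => mat1 ((0 : G3) j)) = fun _ => (1 : Matrix (Fin 2) (Fin 2) ℂ) := by
    funext j; exact mat1_zero
  rw [this, kron_one]

/-- The symplectic form on labels. -/
def sympl (x y : G3) : ZMod 2 := ∑ j, ((x j).1 * (y j).2 + (y j).1 * (x j).2)

lemma sympl_symm (x y : G3) : sympl x y = sympl y x := by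
  unfold sympl; exact Finset.sum_congr rfl fun j _ => by ring

lemma parity3 (a b c : ZMod 2) :
    ((if a = 0 then (1:ℂ) else -1) * (if b = 0 then (1:ℂ) else -1) *
      (if c = 0 then (1:ℂ) else -1) = 1) ↔ a + b + c = 0 := by
  rcases Z2 a with rfl|rfl <;> rcases Z2 b with rfl|rfl <;> rcases Z2 c with rfl|rfl <;>
    simp only [if_pos, if_neg, one_ne_zero, not_false_iff, show ((0:ZMod 2) = 0) from rfl,
      if_true] <;>
    norm_num <;> decide

lemma Kr_commute_sympl {t s : G3} (h : Kr t * Kr s = Kr s * Kr t) : sympl t s = 0 := by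
  have hA : Kr t * Kr s = kron 3 (fun j => mat1 (t j) * mat1 (s j)) := kron_mul 3 _ _
  have hB : Kr s * Kr t
      = (∏ j, eps1 (s j) (t j)) • kron 3 (fun j => mat1 (t j) * mat1 (s j)) := by
    rw [Kr, Kr, kron_mul 3]
    rw [show (fun j => mat1 (s j) * mat1 (t j))
        = fun j => eps1 (s j) (t j) • (mat1 (t j) * mat1 (s j)) by
      funext j; exact mul_eps (s j) (t j)]
    exact kron_smul 3 _ _
  have hfrob : frobM (kron 3 fun j => mat1 (t j) * mat1 (s j))
      (kron 3 fun j => mat1 (t j) * mat1 (s j)) = 8 := by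
    rw [kron_frob]
    simp_rw [frob1_mul]
    norm_num [Fin.prod_univ_three]
  have he : (∏ j, eps1 (s j) (t j)) = 1 := by
    have h2 : frobM (kron 3 fun j => mat1 (t j) * mat1 (s j)) (Kr t * Kr s) = 8 := by
      rw [hA, hfrob]
    rw [h, hB, frobM_smul, hfrob] at h2
    have : (∏ j, eps1 (s j) (t j)) * 8 = 1 * 8 := by rw [h2]; ring
    exact mul_right_cancel₀ (by norm_num) this
  have heps : ∀ j, eps1 (s j) (t j)
      = if (t j).1 * (s j).2 + (s j).1 * (t j).2 = 0 then (1:ℂ) else -1 := by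
    intro j
    have key : ∀ x y : ZMod 2, (x = y) ↔ (y + x = 0) := by decide
    rw [eps1]
    exact if_congr (key _ _) rfl rfl
  rw [Fin.prod_univ_three] at he
  rw [heps, heps, heps] at he
  have := (parity3 _ _ _).mp he
  rw [sympl, Fin.sum_univ_three]
  exact this

/-! ### F₂ linear algebra on labels -/

lemma lbl_add_self : ∀ a : Lbl, a + a = 0 := by decide

lemma G3_add_self (x : G3) : x + x = 0 := by
  funext j
  exact lbl_add_self (x j)

def symB : G3 →ₗ[ZMod 2] G3 →ₗ[ZMod 2] ZMod 2 :=
  LinearMap.mk₂ (ZMod 2) sympl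
    (fun x x' y => by
      unfold sympl
      rw [← Finset.sum_add_distrib]
      exact Finset.sum_congr rfl fun j _ => by
        simp only [Pi.add_apply, Prod.fst_add, Prod.snd_add]; ring)
    (fun c x y => by
      unfold sympl
      rw [smul_eq_mul, Finset.mul_sum]
      exact Finset.sum_congr rfl fun j _ => by
        simp only [Pi.smul_apply, Prod.smul_fst, Prod.smul_snd, smul_eq_mul]; ring)
    (fun x y y' => by
      unfold sympl
      rw [← Finset.sum_add_distrib]
      exact Finset.sum_congr rfl fun j _ => by
        simp only [Pi.add_apply, Prod.fst_add, Prod.snd_add]; ring)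
    (fun c x y => by
      unfold sympl
      rw [smul_eq_mul, Finset.mul_sum]
      exact Finset.sum_congr rfl fun j _ => by
        simp only [Pi.smul_apply, Prod.smul_fst, Prod.smul_snd, smul_eq_mul]; ring)

lemma symB_apply (x y : G3) : symB x y = sympl x y := rfl

lemma sympl_single (x : G3) (j : Fin 3) (v : Lbl) :
    sympl x (Pi.single j v) = (x j).1 * v.2 + v.1 * (x j).2 := by
  unfold sympl
  rw [Finset.sum_eq_single j]
  · rw [Pi.single_eq_same]
  · intro i _ hij
    rw [Pi.single_eq_of_ne hij]
    simp
  · intro h; exact absurd (Finset.mem_univ j) h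

lemma symB_inj : Function.Injective symB := by
  rw [← LinearMap.ker_eq_bot, LinearMap.ker_eq_bot']
  intro x hx
  funext j
  have h1 : sympl x (Pi.single j ((0:ZMod 2),(1:ZMod 2))) = 0 := by
    rw [← symB_apply, hx]; rfl
  have h2 : sympl x (Pi.single j ((1:ZMod 2),(0:ZMod 2))) = 0 := by
    rw [← symB_apply, hx]; rfl
  rw [sympl_single] at h1 h2
  simp only [mul_one, mul_zero, one_mul, zero_mul, add_zero, zero_add] at h1 h2
  show x j = (0, 0)
  exact Prod.ext h1 h2

lemma finrank_G3 : Module.finrank (ZMod 2) G3 = 6 := by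
  have h := Module.card_eq_pow_finrank (K := ZMod 2) (V := G3)
  rw [ZMod.card] at h
  have hc : Fintype.card G3 = 64 := by
    rw [Fintype.card_fun]
    norm_num [Fintype.card_prod, ZMod.card]
  rw [hc] at h
  have : (2:ℕ) ^ 6 = 2 ^ Module.finrank (ZMod 2) G3 := h
  exact (Nat.pow_right_injective le_rfl this).symm

lemma isotropic_finrank_le (N : Submodule (ZMod 2) G3)
    (h : ∀ x ∈ N, ∀ y ∈ N, sympl x y = 0) : Module.finrank (ZMod 2) N ≤ 3 := by
  classical
  have hsurj : Function.Surjective symB := by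
    have h1 : Module.finrank (ZMod 2) (LinearMap.range symB)
        = Module.finrank (ZMod 2) (Module.Dual (ZMod 2) G3) := by
      rw [LinearMap.finrank_range_of_inj symB_inj, Subspace.dual_finrank_eq]
    rw [← LinearMap.range_eq_top]
    exact Submodule.eq_top_of_finrank_eq h1
  set g := (N.dualRestrict).comp symB with hg
  have hgsurj : Function.Surjective g := (Subspace.dualRestrict_surjective (W := N)).comp hsurj
  have hrange : LinearMap.range g = ⊤ := LinearMap.range_eq_top.mpr hgsurj
  have h3 : Module.finrank (ZMod 2) (LinearMap.range g) = Module.finrank (ZMod 2) N := by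
    rw [hrange, finrank_top, Subspace.dual_finrank_eq]
  have h4 := LinearMap.finrank_range_add_finrank_ker g
  have hNle : N ≤ LinearMap.ker g := by
    intro x hx
    rw [LinearMap.mem_ker]
    apply LinearMap.ext
    rintro ⟨y, hy⟩
    show symB x y = 0
    rw [symB_apply]
    exact h x hx y hy
  have h5 : Module.finrank (ZMod 2) N ≤ Module.finrank (ZMod 2) (LinearMap.ker g) :=
    Submodule.finrank_mono hNle
  rw [finrank_G3, h3] at h4
  omega

lemma span_isotropic (S : Finset G3) (horth : ∀ a ∈ S, ∀ b ∈ S, sympl a b = 0) :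
    ∀ x ∈ Submodule.span (ZMod 2) (S : Set G3),
      ∀ y ∈ Submodule.span (ZMod 2) (S : Set G3), sympl x y = 0 := by
  intro x hx y hy
  have step1 : ∀ a ∈ S, symB a y = 0 := by
    intro a ha
    have hle : Submodule.span (ZMod 2) (S : Set G3) ≤ LinearMap.ker (symB a) :=
      Submodule.span_le.mpr (fun b hb => LinearMap.mem_ker.mpr (horth a ha b hb))
    exact LinearMap.mem_ker.mp (hle hy)
  have hle2 : Submodule.span (ZMod 2) (S : Set G3) ≤ LinearMap.ker (symB.flip y) :=
    Submodule.span_le.mpr (fun a ha => LinearMap.mem_ker.mpr (step1 a ha))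
  exact LinearMap.mem_ker.mp (hle2 hx)

lemma subgroup_card (N : Submodule (ZMod 2) G3) :
    Nat.card N = 2 ^ Module.finrank (ZMod 2) N := by
  have fL : Fintype N := Fintype.ofFinite _
  rw [Nat.card_eq_fintype_card, Module.card_eq_pow_finrank (K := ZMod 2), ZMod.card]
lemma seven_closed (S : Finset G3) (hcard : S.card = 7) (h0 : (0:G3) ∉ S)
    (horth : ∀ a ∈ S, ∀ b ∈ S, sympl a b = 0) :
    (∀ a ∈ S, ∀ b ∈ S, a ≠ b → a + b ∈ S) ∧
    Module.finrank (ZMod 2) (Submodule.span (ZMod 2) (S : Set G3)) = 3 ∧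
    (∀ x, x ∈ Submodule.span (ZMod 2) (S : Set G3) → x ≠ 0 → x ∈ S) := by
  classical
  set L := Submodule.span (ZMod 2) (S : Set G3) with hLdef
  have hiso := span_isotropic S horth
  have hr : Module.finrank (ZMod 2) L ≤ 3 := isotropic_finrank_le L hiso
  have hcardL : (L : Set G3).ncard = 2 ^ Module.finrank (ZMod 2) L := by
    rw [← Nat.card_coe_set_eq]
    exact subgroup_card L
  have hsub : (S : Set G3) ⊆ (L : Set G3) \ {0} := by
    intro a ha
    refine ⟨Submodule.subset_span ha, ?_⟩
    simp only [Set.mem_singleton_iff]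
    rintro rfl
    exact h0 ha
  have hfinL : (L : Set G3).Finite := Set.toFinite _
  have hdiff : ((L : Set G3) \ {0}).ncard = (L : Set G3).ncard - 1 := by
    rw [← Set.ncard_singleton (0:G3)]
    exact Set.ncard_diff (Set.singleton_subset_iff.mpr L.zero_mem)
  have h7 : 7 ≤ ((L : Set G3) \ {0}).ncard := by
    have := Set.ncard_le_ncard hsub hfinL.sdiff
    rwa [Set.ncard_coe_finset, hcard] at this
  have hpow : 2 ^ Module.finrank (ZMod 2) L = 8 := by
    have h8 : 2 ^ Module.finrank (ZMod 2) L ≤ 2 ^ 3 := Nat.pow_le_pow_right (by norm_num) hr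
    omega
  have hrank : Module.finrank (ZMod 2) L = 3 := by
    have h9 : (2:ℕ) ^ Module.finrank (ZMod 2) L = 2 ^ 3 := by rw [hpow]; norm_num
    exact Nat.pow_right_injective le_rfl h9
  have heq : (S : Set G3) = (L : Set G3) \ {0} := by
    apply Set.eq_of_subset_of_ncard_le hsub ?_ hfinL.sdiff
    rw [Set.ncard_coe_finset, hcard, hdiff, hcardL, hpow]
  have hmem : ∀ x, x ∈ L → x ≠ 0 → x ∈ S := by
    intro x hx hx0
    have : x ∈ (S : Set G3) := heq ▸ ⟨hx, by simpa using hx0⟩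
    exact this
  refine ⟨?_, hrank, hmem⟩
  intro a ha b hb hne
  apply hmem
  · exact L.add_mem (Submodule.subset_span ha) (Submodule.subset_span hb)
  · intro hab
    apply hne
    have : a + b + b = b := by rw [hab, zero_add]
    rwa [add_assoc, G3_add_self, add_zero] at this

def pieceSubmodule (A : Finset G3) (hA : ∀ a ∈ A, ∀ b ∈ A, a ≠ b → a + b ∈ A) :
    Submodule (ZMod 2) G3 where
  carrier := insert (0:G3) (A : Set G3)
  add_mem' := by
    rintro x y hx hy
    rcases Set.mem_insert_iff.mp hx with rfl | hx'
    · rwa [zero_add]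
    rcases Set.mem_insert_iff.mp hy with rfl | hy'
    · rwa [add_zero]
    by_cases hxy : x = y
    · subst hxy; rw [G3_add_self]; exact Set.mem_insert _ _
    · exact Set.mem_insert_of_mem _ (hA x hx' y hy' hxy)
  zero_mem' := Set.mem_insert _ _
  smul_mem' := by
    intro c x hx
    have hc : ∀ c : ZMod 2, c = 0 ∨ c = 1 := by decide
    rcases hc c with rfl | rfl
    · rw [zero_smul]; exact Set.mem_insert _ _
    · rwa [one_smul]

lemma mem_pieceSubmodule {A : Finset G3} {hA : ∀ a ∈ A, ∀ b ∈ A, a ≠ b → a + b ∈ A}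
    {x : G3} : x ∈ pieceSubmodule A hA ↔ x = 0 ∨ x ∈ A := by
  show x ∈ (insert (0:G3) (A : Set G3)) ↔ _
  simp [Set.mem_insert_iff]

lemma main_comb (k : ℕ) (hk : k ≤ 4) (TL : Finset G3) (CL : Fin k → Finset G3)
    (hT : TL.card = 7) (hT0 : (0:G3) ∉ TL)
    (hTorth : ∀ a ∈ TL, ∀ b ∈ TL, sympl a b = 0)
    (hC : ∀ i, (CL i).card = 7) (hC0 : ∀ i, (0:G3) ∉ CL i)
    (hCorth : ∀ i, ∀ a ∈ CL i, ∀ b ∈ CL i, sympl a b = 0)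
    (hdisj : ∀ i j, i ≠ j → ∀ a ∈ CL i, a ∉ CL j)
    (hcover : ∀ a ∈ TL, ∃ i, a ∈ CL i)
    (hne : ∀ i, TL ≠ CL i) : False := by
  classical
  obtain ⟨hTclosed, hTrank, hTmem⟩ := seven_closed TL hT hT0 hTorth
  have hCclosed : ∀ i, ∀ a ∈ CL i, ∀ b ∈ CL i, a ≠ b → a + b ∈ CL i :=
    fun i => (seven_closed (CL i) (hC i) (hC0 i) (hCorth i)).1
  set L := Submodule.span (ZMod 2) (TL : Set G3) with hLdef
  set A : Fin k → Finset G3 := fun i => TL ∩ CL i with hAdef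
  have hAmem : ∀ i x, x ∈ A i ↔ x ∈ TL ∧ x ∈ CL i := by
    intro i x; rw [hAdef]; exact Finset.mem_inter
  have hAclosed : ∀ i, ∀ a ∈ A i, ∀ b ∈ A i, a ≠ b → a + b ∈ A i := by
    intro i a ha b hb hne'
    rw [hAmem] at ha hb ⊢
    exact ⟨hTclosed a ha.1 b hb.1 hne', hCclosed i a ha.2 b hb.2 hne'⟩
  have hA0 : ∀ i, (0:G3) ∉ A i := fun i h => hT0 ((hAmem i 0).mp h).1
  set H : Fin k → Submodule (ZMod 2) G3 := fun i => pieceSubmodule (A i) (hAclosed i)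
    with hHdef
  have hHmem : ∀ i x, x ∈ H i ↔ x = 0 ∨ x ∈ A i := fun i x => mem_pieceSubmodule
  have hHle : ∀ i, H i ≤ L := by
    intro i x hx
    rcases (hHmem i x).mp hx with rfl | hx'
    · exact L.zero_mem
    · exact Submodule.subset_span ((hAmem i x).mp hx').1
  have hHcard : ∀ i, (A i).card + 1 = 2 ^ Module.finrank (ZMod 2) (H i) := by
    intro i
    rw [← subgroup_card (H i)]
    have h1 : Nat.card (H i) = (insert (0:G3) ((A i) : Set G3)).ncard :=
      Nat.card_coe_set_eq _
    rw [h1, Set.ncard_insert_of_notMem (by simpa using hA0 i) (Set.toFinite _),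
      Set.ncard_coe_finset]
  have hHrankle : ∀ i, Module.finrank (ZMod 2) (H i) ≤ 3 := by
    intro i
    have := Submodule.finrank_mono (hHle i)
    rwa [hTrank] at this
  have hAne : ∀ i, A i ≠ TL := by
    intro i hAeq
    apply hne i
    apply Finset.eq_of_subset_of_card_le
      (fun x hx => ((hAmem i x).mp (hAeq ▸ hx)).2)
    rw [hC i, hT]
  have hHrank2 : ∀ i, Module.finrank (ZMod 2) (H i) ≤ 2 := by
    intro i
    by_contra hgt
    have h3 : Module.finrank (ZMod 2) (H i) = 3 := le_antisymm (hHrankle i) (by omega)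
    have hHL : H i = L := Submodule.eq_of_le_of_finrank_le (hHle i) (by rw [hTrank, h3])
    apply hAne i
    apply Finset.Subset.antisymm (by rw [hAdef]; exact Finset.inter_subset_left)
    intro x hx
    have hxL : x ∈ H i := by rw [hHL]; exact Submodule.subset_span hx
    rcases (hHmem i x).mp hxL with rfl | hx'
    · exact absurd hx hT0
    · exact hx'
  have hcard3 : ∀ i, (A i).card = 0 ∨ (A i).card = 1 ∨ (A i).card = 3 := by
    intro i
    have h := hHcard i
    have hr := hHrank2 i
    set r := Module.finrank (ZMod 2) (H i) with hrdef
    interval_cases r <;> omega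
  have hone3 : ∀ i j, i ≠ j → (A i).card = 3 → (A j).card = 3 → False := by
    intro i j hij h3i h3j
    have hrank2 : ∀ l, (A l).card = 3 → Module.finrank (ZMod 2) (H l) = 2 := by
      intro l hl
      have := hHcard l
      rw [hl] at this
      have h4 : (2:ℕ) ^ 2 = 2 ^ Module.finrank (ZMod 2) (H l) := this
      exact (Nat.pow_right_injective le_rfl h4).symm
    have hsup : Module.finrank (ZMod 2) ↥(H i ⊔ H j) ≤ 3 := by
      have := Submodule.finrank_mono (sup_le (hHle i) (hHle j))
      rwa [hTrank] at this
    have hinf := Submodule.finrank_sup_add_finrank_inf_eq (H i) (H j)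
    rw [hrank2 i h3i, hrank2 j h3j] at hinf
    have h1 : 1 ≤ Module.finrank (ZMod 2) ((H i) ⊓ (H j) : Submodule (ZMod 2) G3) := by
      omega
    have hnebot : ((H i) ⊓ (H j) : Submodule (ZMod 2) G3) ≠ ⊥ := by
      intro hbot
      rw [hbot, finrank_bot] at h1
      omega
    obtain ⟨x, hxmem, hx0⟩ := (Submodule.ne_bot_iff _).mp hnebot
    obtain ⟨hxi, hxj⟩ := Submodule.mem_inf.mp hxmem
    have hxAi : x ∈ A i := by
      rcases (hHmem i x).mp hxi with rfl | h
      · exact absurd rfl hx0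
      · exact h
    have hxAj : x ∈ A j := by
      rcases (hHmem j x).mp hxj with rfl | h
      · exact absurd rfl hx0
      · exact h
    exact hdisj i j hij x ((hAmem i x).mp hxAi).2 ((hAmem j x).mp hxAj).2
  have hsum : 7 ≤ ∑ i, (A i).card := by
    have hTsub : TL ⊆ Finset.univ.biUnion A := by
      intro a ha
      obtain ⟨i, hi⟩ := hcover a ha
      exact Finset.mem_biUnion.mpr ⟨i, Finset.mem_univ i, (hAmem i a).mpr ⟨ha, hi⟩⟩
    calc 7 = TL.card := hT.symm
    _ ≤ (Finset.univ.biUnion A).card := Finset.card_le_card hTsub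
    _ ≤ ∑ i, (A i).card := Finset.card_biUnion_le
  by_cases h3 : ∃ i0, (A i0).card = 3
  · obtain ⟨i0, hi0⟩ := h3
    have hrest : ∀ i ∈ Finset.univ.erase i0, (A i).card ≤ 1 := by
      intro i hi
      have hne' : i ≠ i0 := Finset.ne_of_mem_erase hi
      rcases hcard3 i with h | h | h
      · omega
      · omega
      · exact (hone3 i i0 hne' h hi0).elim
    have hb := Finset.sum_le_card_nsmul (Finset.univ.erase i0) (fun i => (A i).card) 1 hrest
    have hsplit : ∑ i, (A i).card
        = (A i0).card + ∑ i ∈ Finset.univ.erase i0, (A i).card :=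
      (Finset.add_sum_erase _ _ (Finset.mem_univ i0)).symm
    have hcardu : (Finset.univ.erase i0).card = k - 1 := by
      rw [Finset.card_erase_of_mem (Finset.mem_univ i0), Finset.card_univ, Fintype.card_fin]
    rw [hcardu, smul_eq_mul] at hb
    omega
  · push_neg at h3
    have hrest : ∀ i ∈ Finset.univ, (A i).card ≤ 1 := by
      intro i _
      rcases hcard3 i with h | h | h
      · omega
      · omega
      · exact (h3 i h).elim
    have hb := Finset.sum_le_card_nsmul Finset.univ (fun i => (A i).card) 1 hrest
    rw [Finset.card_univ, Fintype.card_fin, smul_eq_mul] at hb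
    omega
/-! ### Labels of Pauli operators -/

def lab (U : QMat 3) : G3 := if h : ∃ t : G3, U = Kr t then h.choose else 0

lemma Kr_lab {U : QMat 3} (h : ∃ t : G3, U = Kr t) : Kr (lab U) = U := by
  rw [lab, dif_pos h]; exact h.choose_spec.symm

lemma phaseEq_refl (U : QMat 3) : PhaseEq U U := ⟨1, one_ne_zero, (one_smul _ _).symm⟩

lemma class_labels (D : Set (QMat 3)) (hD : IsMaxClass 3 D) :
    ∃ FD : Finset G3,
      (∀ x, x ∈ FD ↔ ∃ U ∈ D, lab U = x) ∧ FD.card = 7 ∧ (0:G3) ∉ FD ∧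
      (∀ a ∈ FD, ∀ b ∈ FD, sympl a b = 0) := by
  classical
  obtain ⟨hfin, hncard, hPauli, hcomm, -⟩ := hD
  have hKr : ∀ U ∈ D, Kr (lab U) = U := fun U hU =>
    Kr_lab ((isPauliOp_iff_Kr U).mp (hPauli U hU).1)
  refine ⟨hfin.toFinset.image lab, ?_, ?_, ?_, ?_⟩
  · intro x
    simp only [Finset.mem_image, Set.Finite.mem_toFinset]
  · have hinj : Set.InjOn lab ↑hfin.toFinset := by
      intro U hU V hV hUV
      simp only [Finset.mem_coe, Set.Finite.mem_toFinset] at hU hV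
      rw [← hKr U hU, ← hKr V hV, hUV]
    rw [Finset.card_image_of_injOn hinj, ← Set.ncard_eq_toFinset_card D hfin, hncard]
    norm_num
  · intro h0
    rw [Finset.mem_image] at h0
    obtain ⟨U, hU, hU0⟩ := h0
    rw [Set.Finite.mem_toFinset] at hU
    apply (hPauli U hU).2
    rw [← hKr U hU, hU0, Kr_zero]
  · intro a ha b hb
    rw [Finset.mem_image] at ha hb
    obtain ⟨U, hU, rfl⟩ := ha
    obtain ⟨V, hV, rfl⟩ := hb
    rw [Set.Finite.mem_toFinset] at hU hV
    apply Kr_commute_sympl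
    rw [hKr U hU, hKr V hV]
    exact hcomm U hU V hV

end PauliAux

open PauliAux in
theorem no_extra_class_from_k_le_four_d8' (k : ℕ) (hk : k ≤ 4)
    (C : Fin k → Set (QMat 3))
    (hmax : ∀ i, IsMaxClass 3 (C i))
    (hdisj : ∀ i j, i ≠ j → ClassDisjoint (C i) (C j)) :
    ¬ ∃ T : Set (QMat 3), IsMaxClass 3 T ∧
        (∀ U ∈ T, ∃ i, ∃ V ∈ C i, PhaseEq U V) ∧
        (∀ i, ¬ ClassPhaseEq T (C i)) := by
  classical
  rintro ⟨T, hmaxT, hcover, hneq⟩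
  obtain ⟨FT, hFTmem, hFTcard, hFT0, hFTorth⟩ := class_labels T hmaxT
  choose FC hFCmem hFCcard hFC0 hFCorth using fun i => class_labels (C i) (hmax i)
  have hKrT : ∀ U ∈ T, Kr (lab U) = U := fun U hU =>
    Kr_lab ((isPauliOp_iff_Kr U).mp ((hmaxT.2.2.1 U hU).1))
  have hKrC : ∀ i, ∀ U ∈ C i, Kr (lab U) = U := fun i U hU =>
    Kr_lab ((isPauliOp_iff_Kr U).mp (((hmax i).2.2.1 U hU).1))
  have hlab_eq : ∀ {U V : QMat 3}, Kr (lab U) = U → Kr (lab V) = V →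
      PhaseEq U V → lab U = lab V := by
    intro U V hU hV ⟨c, hc, hUV⟩
    apply Kr_phase hc
    rw [hU, hV]
    exact hUV
  apply main_comb k hk FT FC hFTcard hFT0 hFTorth hFCcard hFC0 hFCorth
  · -- disjointness of label sets
    intro i j hij a hai haj
    obtain ⟨U, hU, rfl⟩ := (hFCmem i a).mp hai
    obtain ⟨V, hV, hVU⟩ := (hFCmem j _).mp haj
    apply hdisj j i hij.symm V hV U hU
    rw [← hKrC j V hV, ← hKrC i U hU, hVU]
    exact phaseEq_refl _
  · -- cover
    intro a ha
    obtain ⟨U, hU, rfl⟩ := (hFTmem a).mp ha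
    obtain ⟨i, V, hV, hUV⟩ := hcover U hU
    refine ⟨i, (hFCmem i _).mpr ⟨V, hV, ?_⟩⟩
    exact (hlab_eq (hKrT U hU) (hKrC i V hV) hUV).symm
  · -- T not equal to any class
    intro i hTC
    apply hneq i
    constructor
    · intro U hU
      have : lab U ∈ FC i := by rw [← hTC]; exact (hFTmem _).mpr ⟨U, hU, rfl⟩
      obtain ⟨V, hV, hVU⟩ := (hFCmem i _).mp this
      refine ⟨V, hV, ?_⟩
      rw [← hKrT U hU, ← hKrC i V hV, hVU]
      exact phaseEq_refl _
    · intro V hV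
      have : lab V ∈ FT := by rw [hTC]; exact (hFCmem i _).mpr ⟨V, hV, rfl⟩
      obtain ⟨U, hU, hUV⟩ := (hFTmem _).mp this
      refine ⟨U, hU, ?_⟩
      rw [← hKrT U hU, ← hKrC i V hV, hUV]
      exact phaseEq_refl _
/-- For `k ≤ 4` pairwise disjoint maximal commuting Pauli classes in `d = 8`,
no further maximal commuting Pauli class can be formed, up to phase, out of the operators
of `C 0 ∪ ⋯ ∪ C (k-1)`. -/
theorem no_extra_class_from_k_le_four_d8 (k : ℕ) (hk : k ≤ 4)
    (C : Fin k → Set (QMat 3))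
    (hmax : ∀ i, IsMaxClass 3 (C i))
    (hdisj : ∀ i j, i ≠ j → ClassDisjoint (C i) (C j)) :
    ¬ ∃ T : Set (QMat 3), IsMaxClass 3 T ∧
        (∀ U ∈ T, ∃ i, ∃ V ∈ C i, PhaseEq U V) ∧
        (∀ i, ¬ ClassPhaseEq T (C i)) := by
  exact no_extra_class_from_k_le_four_d8' k hk C hmax hdisj
end
end
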